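/- Let N be a level-k binary tree-child network with k ≥ 2, and let x, y be leaves such that N contains a cherry on {x,y} (x and y have a common parent). Then every MLLS of N contains the cherry on {x,y}. Conversely, if every MLLS of N contains a cherry on {x,y}, then N contains a cherry on {x,y}. -/

import Mathlib

open scoped Classical
noncomputable section

/-- A (rooted binary phylogenetic) network datum: a finite directed graph on `ℕ`
with an optional leaf-labelling by `α`. -/
structure Net (α : Type) where
  verts : Finset ℕ
  edges : Finset (ℕ × ℕ)
  lab : ℕ → Option α

namespace Net

variable {α β : Type}

def Edge (N : Net α) (u v : ℕ) : Prop := (u, v) ∈ N.edges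

def indeg (N : Net α) (v : ℕ) : ℕ := (N.edges.filter fun e => e.2 = v).card
def outdeg (N : Net α) (v : ℕ) : ℕ := (N.edges.filter fun e => e.1 = v).card

/-- Reachability by directed paths. -/
def Reaches (N : Net α) : ℕ → ℕ → Prop := Relation.ReflTransGen N.Edge

def IsRoot (N : Net α) (v : ℕ) : Prop :=
  v ∈ N.verts ∧ N.indeg v = 0 ∧ N.outdeg v = 1
def IsLeaf (N : Net α) (v : ℕ) : Prop :=
  v ∈ N.verts ∧ N.indeg v = 1 ∧ N.outdeg v = 0
def IsTreeNode (N : Net α) (v : ℕ) : Prop :=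
  v ∈ N.verts ∧ N.indeg v = 1 ∧ N.outdeg v = 2
def IsRetic (N : Net α) (v : ℕ) : Prop :=
  v ∈ N.verts ∧ N.indeg v = 2 ∧ N.outdeg v = 1

/-- `N` is a rooted binary phylogenetic network on leaf set `α`. -/
def IsNetwork (N : Net α) : Prop :=
  (∀ e ∈ N.edges, e.1 ∈ N.verts ∧ e.2 ∈ N.verts) ∧
  (∀ u v, N.Edge u v → ¬ N.Reaches v u) ∧
  (∃! r, N.IsRoot r) ∧
  (∀ v ∈ N.verts, N.IsRoot v ∨ N.IsLeaf v ∨ N.IsTreeNode v ∨ N.IsRetic v) ∧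
  (∀ v, (∃ x, N.lab v = some x) ↔ N.IsLeaf v) ∧
  (∀ x : α, ∃! v, N.lab v = some x)

/-- Tree-child: every non-leaf node has a child that is a tree node or a leaf. -/
def TreeChild (N : Net α) : Prop :=
  N.IsNetwork ∧
  ∀ v ∈ N.verts, ¬ N.IsLeaf v → ∃ c, N.Edge v c ∧ (N.IsTreeNode c ∨ N.IsLeaf c)

def IsReticEdge (N : Net α) (e : ℕ × ℕ) : Prop := e ∈ N.edges ∧ N.IsRetic e.2

def deleteNode (N : Net α) (v : ℕ) : Net α :=
  ⟨N.verts.erase v, N.edges.filter fun e => e.1 ≠ v ∧ e.2 ≠ v, N.lab⟩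

def deleteEdge (N : Net α) (e : ℕ × ℕ) : Net α := ⟨N.verts, N.edges.erase e, N.lab⟩

def deleteEdges (N : Net α) (E : Finset (ℕ × ℕ)) : Net α := ⟨N.verts, N.edges \ E, N.lab⟩

/-- One step of cleaning up: delete an unlabelled outdegree-0 node, or suppress an
indegree-1 outdegree-1 node.  (In this simple-digraph encoding the parallel-edge rule
is subsumed: the inserted edge merges with an existing one, and the endpoints are then
suppressed by further steps.) -/
inductive CleanStep {α : Type} : Net α → Net α → Prop
  | delNode (N : Net α) (v : ℕ) (hv : v ∈ N.verts) (h0 : N.outdeg v = 0)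
      (hlab : N.lab v = none) : CleanStep N (N.deleteNode v)
  | suppress (N : Net α) (u v w : ℕ) (h1 : N.indeg v = 1) (h2 : N.outdeg v = 1)
      (hu : N.Edge u v) (hw : N.Edge v w) :
      CleanStep N ⟨N.verts.erase v,
        insert (u, w) (N.edges.filter fun e => e.1 ≠ v ∧ e.2 ≠ v), N.lab⟩

/-- `N` cleans up to `M`: apply clean-up steps until none applies. -/
def CleansTo (N M : Net α) : Prop :=
  Relation.ReflTransGen CleanStep N M ∧ ∀ M', ¬ CleanStep M M'

/-- Maximum subnetwork: delete one reticulation edge and clean up. -/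
def IsMaxSubnet (N M : Net α) : Prop :=
  ∃ e, N.IsReticEdge e ∧ CleansTo (N.deleteEdge e) M

/-- A reticulation edge is valid if deleting it and cleaning up removes exactly
2 nodes and 3 edges. -/
def ValidEdge (N : Net α) (e : ℕ × ℕ) : Prop :=
  N.IsReticEdge e ∧
  ∀ M, CleansTo (N.deleteEdge e) M →
    M.verts.card + 2 = N.verts.card ∧ M.edges.card + 3 = N.edges.card

/-- A valid network: all reticulation edges are valid. -/
def Valid (N : Net α) : Prop :=
  N.IsNetwork ∧ ∀ e, N.IsReticEdge e → N.ValidEdge e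

def Subgraph (M N : Net α) : Prop :=
  M.verts ⊆ N.verts ∧ M.edges ⊆ N.edges ∧ ∀ v ∈ M.verts, M.lab v = N.lab v

/-- One edge-subdivision step. -/
inductive SubdivStep {α : Type} : Net α → Net α → Prop
  | mk (N : Net α) (u v w : ℕ) (he : N.Edge u v) (hw : w ∉ N.verts) :
      SubdivStep N ⟨insert w N.verts,
        insert (u, w) (insert (w, v) (N.edges.erase (u, v))), N.lab⟩

/-- `M` is a subdivision of `N`. -/
def Subdivision (N M : Net α) : Prop := Relation.ReflTransGen SubdivStep N M

/-- Isomorphism of networks (preserving leaf labels). -/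
def Iso (N M : Net α) : Prop :=
  ∃ f : ℕ → ℕ, Set.BijOn f ↑N.verts ↑M.verts ∧
    (∀ u ∈ N.verts, ∀ v ∈ N.verts, (N.Edge u v ↔ M.Edge (f u) (f v))) ∧
    ∀ v ∈ N.verts, N.lab v = M.lab (f v)

/-- `N` displays `M`: some subgraph of `N` is (isomorphic to) a subdivision of `M`. -/
def Displays (N M : Net α) : Prop :=
  ∃ S M', Subgraph S N ∧ Subdivision M M' ∧ Iso M' S

/-- Leaf-descendant (label) set of a node. -/
def descSet (N : Net α) (v : ℕ) : Set α :=
  {x | ∃ l, N.lab l = some x ∧ N.Reaches v l}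

def Adj (N : Net α) (u v : ℕ) : Prop := N.Edge u v ∨ N.Edge v u

def ConnectedIn (N : Net α) (S : Finset ℕ) (u v : ℕ) : Prop :=
  Relation.ReflTransGen (fun a b => a ∈ S ∧ b ∈ S ∧ N.Adj a b) u v

/-- A biconnected vertex set: at least 3 nodes, connected, and no cut-node. -/
def BiconnectedSet (N : Net α) (S : Finset ℕ) : Prop :=
  3 ≤ S.card ∧ S ⊆ N.verts ∧
  (∀ u ∈ S, ∀ v ∈ S, N.ConnectedIn S u v) ∧
  ∀ c ∈ S, ∀ u ∈ S.erase c, ∀ v ∈ S.erase c, N.ConnectedIn (S.erase c) u v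

/-- A biconnected component: a maximal biconnected set. -/
def BlobSet (N : Net α) (S : Finset ℕ) : Prop :=
  N.BiconnectedSet S ∧ ∀ T, N.BiconnectedSet T → S ⊆ T → S = T

/-- A blob: either a biconnected component, or a tree node in no biconnected component. -/
def IsBlob (N : Net α) (S : Finset ℕ) : Prop :=
  N.BlobSet S ∨ ∃ t, S = {t} ∧ N.IsTreeNode t ∧ ∀ T, N.BlobSet T → t ∉ T

/-- The top node of a blob: the node of the blob from which all its nodes are reachable. -/
def TopNode (N : Net α) (S : Finset ℕ) (v : ℕ) : Prop :=
  v ∈ S ∧ ∀ u ∈ S, N.Reaches v u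

/-- The blob tree of `N` contains a blob node labelled `A`. -/
def HasBlobNode (N : Net α) (A : Set α) : Prop :=
  ∃ S v, N.IsBlob S ∧ N.TopNode S v ∧ N.descSet v = A

/-- The blob tree of `N` has an edge from blob node `A` to blob node `B`. -/
def BTEdge (N : Net α) (A B : Set α) : Prop :=
  ∃ S T u v, N.IsBlob S ∧ N.IsBlob T ∧ S ≠ T ∧ N.TopNode S u ∧ N.TopNode T v ∧
    N.descSet u = A ∧ N.descSet v = B ∧ ∃ w ∈ S, N.Edge w v

def reticCount (N : Net α) (S : Finset ℕ) : ℕ := (S.filter fun v => N.IsRetic v).card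

/-- `N` is a level-`k` network. -/
def IsLevel (N : Net α) (k : ℕ) : Prop :=
  (∀ S, N.BiconnectedSet S → N.reticCount S ≤ k) ∧
  (k = 0 ∨ ∃ S, N.BiconnectedSet S ∧ N.reticCount S = k)

/-- `M` is a maximum lower-level subnetwork (MLLS) of the level-`k` network `N`:
obtained by deleting exactly one valid reticulation edge from every level-`k`
biconnected component and cleaning up. -/
def IsMLLS (N : Net α) (k : ℕ) (M : Net α) : Prop :=
  ∃ E : Finset (ℕ × ℕ),
    (∀ e ∈ E, N.ValidEdge e) ∧
    (∀ S, N.BlobSet S → N.reticCount S = k → ∃! e, e ∈ E ∧ e.1 ∈ S ∧ e.2 ∈ S) ∧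
    (∀ e ∈ E, ∃ S, N.BlobSet S ∧ N.reticCount S = k ∧ e.1 ∈ S ∧ e.2 ∈ S) ∧
    CleansTo (N.deleteEdges E) M

/-- A cherry on two leaves. -/
def Cherry (N : Net α) (x y : ℕ) : Prop :=
  N.IsLeaf x ∧ N.IsLeaf y ∧ x ≠ y ∧ ∃ p, N.Edge p x ∧ N.Edge p y

/-- A reticulated cherry on two leaves, with the reticulation on `y`. -/
def RetCherry (N : Net α) (x y : ℕ) : Prop :=
  N.IsLeaf x ∧ N.IsLeaf y ∧
  ∃ p r, N.IsRetic r ∧ N.Edge r y ∧ N.Edge p x ∧ N.Edge p r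

/-- A reticulated cherry shape on non-reticulation nodes `x, y` with nodes
`px, py, gy` and edges `(px,x), (px,py), (gy,py), (py,y)`, `py` a reticulation. -/
def RetCherryShape (N : Net α) (x y px py gy : ℕ) : Prop :=
  ¬ N.IsRetic x ∧ ¬ N.IsRetic y ∧ N.IsRetic py ∧ px ≠ gy ∧
  N.Edge px x ∧ N.Edge px py ∧ N.Edge gy py ∧ N.Edge py y

def DirPath (N : Net α) (l : List ℕ) : Prop := l ≠ [] ∧ l.Chain' N.Edge

/-- `l` is the node sequence of an up-down path from `x` to `y`: a directed path from
an apex down to `x`, reversed, followed by a directed path from the apex down to `y`. -/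
def IsUpDownPath (N : Net α) (x y : ℕ) (l : List ℕ) : Prop :=
  ∃ p q : List ℕ, N.DirPath p ∧ N.DirPath q ∧ p.head? = q.head? ∧
    p.getLast? = some x ∧ q.getLast? = some y ∧ l = p.reverse ++ q.tail

/-- `n` is the shortest up-down distance between `x` and `y` (an up-down path with `n`
edges has `n+1` nodes). -/
def IsUpDownDist (N : Net α) (x y n : ℕ) : Prop :=
  (∃ l, N.IsUpDownPath x y l ∧ l.length = n + 1) ∧
  ∀ l, N.IsUpDownPath x y l → n + 1 ≤ l.length

def relabel (N : Net α) (f : α → β) : Net β :=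
  ⟨N.verts, N.edges, fun v => (N.lab v).map f⟩

/-- Collapse the pendant subnetwork rooted at `y` to a single leaf labelled `A`. -/
def collapseAt (N : Net α) (y : ℕ) (A : α) : Net α :=
  ⟨N.verts.filter (fun v => v = y ∨ ¬ N.Reaches y v),
   N.edges.filter (fun e => ¬ N.Reaches y e.1),
   fun v => if v = y then some A else N.lab v⟩

/-- Leaf-descendant set for networks whose leaves are labelled by sets of taxa. -/
def descUnion (N : Net (Set α)) (v : ℕ) : Set α :=
  {x | ∃ l s, N.lab l = some s ∧ x ∈ s ∧ N.Reaches v l}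

def HasBlobNodeU (N : Net (Set α)) (A : Set α) : Prop :=
  ∃ S v, N.IsBlob S ∧ N.TopNode S v ∧ N.descUnion v = A

/-- `M` is a subnetwork of `N`: displayed by `N` and not `N` itself. -/
def Subnet (N M : Net α) : Prop := M.IsNetwork ∧ N.Displays M ∧ ¬ N.Iso M

/-- Equality of sets of networks up to isomorphism. -/
def SetEquiv (S T : Set (Net α)) : Prop :=
  ∀ M, (∃ M₁ ∈ S, Iso M M₁) ↔ ∃ M₂ ∈ T, Iso M M₂

/-- The subnetworks of `N` of level at most `k - 1`. -/
def lowerSubnets (N : Net α) (k : ℕ) : Set (Net α) :=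
  {M | N.Subnet M ∧ ∃ j < k, M.IsLevel j}

/-- The set of all MLLSs of `N`. -/
def mllsSet (N : Net α) : Set (Net α) :=
  {M | ∃ k, N.IsLevel k ∧ N.IsMLLS k M}

end Net
namespace CPf
open Relation

variable {X : Type}

/-! ### Basic degree lemmas -/

def inE (G : Net X) (v : ℕ) : Finset (ℕ × ℕ) := G.edges.filter fun e => e.2 = v
def outE (G : Net X) (v : ℕ) : Finset (ℕ × ℕ) := G.edges.filter fun e => e.1 = v

lemma indeg_def (G : Net X) (v : ℕ) : G.indeg v = (inE G v).card := rfl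
lemma outdeg_def (G : Net X) (v : ℕ) : G.outdeg v = (outE G v).card := rfl

lemma mem_inE {G : Net X} {a v : ℕ} : (a, v) ∈ inE G v ↔ (a, v) ∈ G.edges := by
  simp [inE]

lemma mem_outE {G : Net X} {v b : ℕ} : (v, b) ∈ outE G v ↔ (v, b) ∈ G.edges := by
  simp [outE]

lemma inE_mem_snd {G : Net X} {e : ℕ × ℕ} {v : ℕ} (h : e ∈ inE G v) :
    e ∈ G.edges ∧ e.2 = v := Finset.mem_filter.mp h

lemma outE_mem_fst {G : Net X} {e : ℕ × ℕ} {v : ℕ} (h : e ∈ outE G v) :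
    e ∈ G.edges ∧ e.1 = v := Finset.mem_filter.mp h

lemma inE_singleton {G : Net X} {v a : ℕ} (h : G.indeg v = 1) (ha : (a, v) ∈ G.edges) :
    inE G v = {(a, v)} := by
  rw [indeg_def] at h
  obtain ⟨e, he⟩ := Finset.card_eq_one.mp h
  have hmem : (a, v) ∈ inE G v := mem_inE.mpr ha
  rw [he] at hmem ⊢
  rw [Finset.mem_singleton] at hmem
  rw [hmem]

lemma outE_singleton {G : Net X} {v b : ℕ} (h : G.outdeg v = 1) (hb : (v, b) ∈ G.edges) :
    outE G v = {(v, b)} := by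
  rw [outdeg_def] at h
  obtain ⟨e, he⟩ := Finset.card_eq_one.mp h
  have hmem : (v, b) ∈ outE G v := mem_outE.mpr hb
  rw [he] at hmem ⊢
  rw [Finset.mem_singleton] at hmem
  rw [hmem]

lemma in_unique {G : Net X} {v a b : ℕ} (h : G.indeg v = 1) (ha : (a, v) ∈ G.edges)
    (hb : (b, v) ∈ G.edges) : a = b := by
  have h1 := inE_singleton h ha
  have : (b, v) ∈ inE G v := mem_inE.mpr hb
  rw [h1, Finset.mem_singleton] at this
  exact (congrArg Prod.fst this).symm

lemma out_unique {G : Net X} {v a b : ℕ} (h : G.outdeg v = 1) (ha : (v, a) ∈ G.edges)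
    (hb : (v, b) ∈ G.edges) : a = b := by
  have h1 := outE_singleton h ha
  have : (v, b) ∈ outE G v := mem_outE.mpr hb
  rw [h1, Finset.mem_singleton] at this
  exact (congrArg Prod.snd this).symm

lemma in_exists {G : Net X} {v : ℕ} (h : G.indeg v = 1) : ∃ a, (a, v) ∈ G.edges := by
  rw [indeg_def] at h
  obtain ⟨e, he⟩ := Finset.card_eq_one.mp h
  have : e ∈ inE G v := he ▸ Finset.mem_singleton_self e
  obtain ⟨h1, h2⟩ := inE_mem_snd this
  exact ⟨e.1, by rwa [← h2, Prod.mk.eta]⟩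

lemma out_exists {G : Net X} {v : ℕ} (h : G.outdeg v = 1) : ∃ b, (v, b) ∈ G.edges := by
  rw [outdeg_def] at h
  obtain ⟨e, he⟩ := Finset.card_eq_one.mp h
  have : e ∈ outE G v := he ▸ Finset.mem_singleton_self e
  obtain ⟨h1, h2⟩ := outE_mem_fst this
  exact ⟨e.2, by rwa [← h2, Prod.mk.eta]⟩

lemma indeg_pos_of_mem {G : Net X} {a v : ℕ} (h : (a, v) ∈ G.edges) : 0 < G.indeg v := by
  rw [indeg_def]
  exact Finset.card_pos.mpr ⟨(a, v), mem_inE.mpr h⟩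

lemma outdeg_pos_of_mem {G : Net X} {v b : ℕ} (h : (v, b) ∈ G.edges) : 0 < G.outdeg v := by
  rw [outdeg_def]
  exact Finset.card_pos.mpr ⟨(v, b), mem_outE.mpr h⟩

lemma no_in_of_zero {G : Net X} {a v : ℕ} (h : G.indeg v = 0) (ha : (a, v) ∈ G.edges) : False := by
  have := indeg_pos_of_mem ha; omega

lemma no_out_of_zero {G : Net X} {v b : ℕ} (h : G.outdeg v = 0) (hb : (v, b) ∈ G.edges) : False := by
  have := outdeg_pos_of_mem hb; omega

lemma two_in {G : Net X} {v a b : ℕ} (ha : (a, v) ∈ G.edges) (hb : (b, v) ∈ G.edges)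
    (hab : a ≠ b) : 2 ≤ G.indeg v := by
  rw [indeg_def]
  have : {(a, v), (b, v)} ⊆ inE G v := by
    intro e he
    rcases Finset.mem_insert.mp he with h | h
    · subst h; exact mem_inE.mpr ha
    · rw [Finset.mem_singleton] at h; subst h; exact mem_inE.mpr hb
  calc 2 = ({(a, v), (b, v)} : Finset (ℕ × ℕ)).card := by
            rw [Finset.card_insert_of_notMem (by simp [hab]), Finset.card_singleton]
    _ ≤ _ := Finset.card_le_card this

lemma two_out {G : Net X} {v a b : ℕ} (ha : (v, a) ∈ G.edges) (hb : (v, b) ∈ G.edges)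
    (hab : a ≠ b) : 2 ≤ G.outdeg v := by
  rw [outdeg_def]
  have : {(v, a), (v, b)} ⊆ outE G v := by
    intro e he
    rcases Finset.mem_insert.mp he with h | h
    · subst h; exact mem_outE.mpr ha
    · rw [Finset.mem_singleton] at h; subst h; exact mem_outE.mpr hb
  calc 2 = ({(v, a), (v, b)} : Finset (ℕ × ℕ)).card := by
            rw [Finset.card_insert_of_notMem (by simp [hab]), Finset.card_singleton]
    _ ≤ _ := Finset.card_le_card this

/-- a two-element out-edge set -/
lemma outE_pair {G : Net X} {v a b : ℕ} (h : G.outdeg v = 2) (ha : (v, a) ∈ G.edges)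
    (hb : (v, b) ∈ G.edges) (hab : a ≠ b) : outE G v = {(v, a), (v, b)} := by
  symm
  apply Finset.eq_of_subset_of_card_le
  · intro e he
    rcases Finset.mem_insert.mp he with h' | h'
    · subst h'; exact mem_outE.mpr ha
    · rw [Finset.mem_singleton] at h'; subst h'; exact mem_outE.mpr hb
  · rw [← outdeg_def, h, Finset.card_insert_of_notMem (by simp [hab]), Finset.card_singleton]

lemma inE_pair {G : Net X} {v a b : ℕ} (h : G.indeg v = 2) (ha : (a, v) ∈ G.edges)
    (hb : (b, v) ∈ G.edges) (hab : a ≠ b) : inE G v = {(a, v), (b, v)} := by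
  symm
  apply Finset.eq_of_subset_of_card_le
  · intro e he
    rcases Finset.mem_insert.mp he with h' | h'
    · subst h'; exact mem_inE.mpr ha
    · rw [Finset.mem_singleton] at h'; subst h'; exact mem_inE.mpr hb
  · rw [← indeg_def, h, Finset.card_insert_of_notMem (by simp [hab]), Finset.card_singleton]

/-- extract the second in-edge of an indegree-2 node -/
lemma in_pair_exists {G : Net X} {v a : ℕ} (h : G.indeg v = 2) (ha : (a, v) ∈ G.edges) :
    ∃ b, (b, v) ∈ G.edges ∧ b ≠ a ∧ inE G v = {(a, v), (b, v)} := by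
  rw [indeg_def] at h
  obtain ⟨e, f, hef, hpair⟩ := Finset.card_eq_two.mp h
  have hae : (a, v) ∈ inE G v := mem_inE.mpr ha
  rw [hpair] at hae
  rcases Finset.mem_insert.mp hae with h' | h'
  · -- e = (a,v)
    subst h'
    have hf : f ∈ inE G v := hpair ▸ (by simp)
    obtain ⟨hf1, hf2⟩ := inE_mem_snd hf
    refine ⟨f.1, by rwa [← hf2, Prod.mk.eta], ?_, ?_⟩
    · intro hfa
      apply hef
      have : f = (f.1, f.2) := rfl
      rw [this, hfa, hf2]
    · rw [hpair]
      congr 1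
      have : f = (f.1, f.2) := rfl
      rw [this, hf2]
  · rw [Finset.mem_singleton] at h'
    subst h'
    have he : e ∈ inE G v := hpair ▸ (by simp)
    obtain ⟨he1, he2⟩ := inE_mem_snd he
    refine ⟨e.1, by rwa [← he2, Prod.mk.eta], ?_, ?_⟩
    · intro hea
      apply hef
      have : e = (e.1, e.2) := rfl
      rw [this, hea, he2]
    · rw [hpair, Finset.pair_comm]
      congr 1
      have : e = (e.1, e.2) := rfl
      rw [this, he2]

end CPf
namespace CPf
open Relation

variable {X : Type}

/-! ### Network structure lemmas -/

section Network

variable {N : Net X}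

lemma edge_verts (hN : N.TreeChild) {a b : ℕ} (h : (a, b) ∈ N.edges) :
    a ∈ N.verts ∧ b ∈ N.verts := hN.1.1 (a, b) h

lemma acyc (hN : N.TreeChild) (v : ℕ) : ¬ Relation.TransGen N.Edge v v := by
  intro hv
  obtain ⟨c, hc1, hc2⟩ := Relation.TransGen.head'_iff.mp hv
  exact hN.1.2.1 v c hc1 hc2

lemma edge_ne (hN : N.TreeChild) {a b : ℕ} (h : (a, b) ∈ N.edges) : a ≠ b := by
  intro hab
  subst hab
  exact acyc hN a (Relation.TransGen.single h)

lemma no_two_cycle (hN : N.TreeChild) {a b : ℕ} (h1 : (a, b) ∈ N.edges)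
    (h2 : (b, a) ∈ N.edges) : False :=
  acyc hN a (Relation.TransGen.head (show N.Edge a b from h1)
    (Relation.TransGen.single (show N.Edge b a from h2)))

lemma classify (hN : N.TreeChild) {v : ℕ} (hv : v ∈ N.verts) :
    (N.indeg v = 0 ∧ N.outdeg v = 1) ∨ (N.indeg v = 1 ∧ N.outdeg v = 0) ∨
    (N.indeg v = 1 ∧ N.outdeg v = 2) ∨ (N.indeg v = 2 ∧ N.outdeg v = 1) := by
  rcases hN.1.2.2.2.1 v hv with h | h | h | h
  · exact Or.inl ⟨h.2.1, h.2.2⟩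
  · exact Or.inr (Or.inl ⟨h.2.1, h.2.2⟩)
  · exact Or.inr (Or.inr (Or.inl ⟨h.2.1, h.2.2⟩))
  · exact Or.inr (Or.inr (Or.inr ⟨h.2.1, h.2.2⟩))

lemma indeg_le_two (hN : N.TreeChild) {v : ℕ} (hv : v ∈ N.verts) : N.indeg v ≤ 2 := by
  rcases classify hN hv with h | h | h | h <;> omega

lemma outdeg_le_two (hN : N.TreeChild) {v : ℕ} (hv : v ∈ N.verts) : N.outdeg v ≤ 2 := by
  rcases classify hN hv with h | h | h | h <;> omega

lemma not_one_one (hN : N.TreeChild) {v : ℕ} (hv : v ∈ N.verts) :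
    ¬ (N.indeg v = 1 ∧ N.outdeg v = 1) := by
  rcases classify hN hv with h | h | h | h <;> omega

lemma leaf_lab (hN : N.TreeChild) {v : ℕ} (h : N.IsLeaf v) : ∃ l, N.lab v = some l :=
  (hN.1.2.2.2.2.1 v).mpr h

lemma lab_leaf (hN : N.TreeChild) {v : ℕ} {l : X} (h : N.lab v = some l) : N.IsLeaf v :=
  (hN.1.2.2.2.2.1 v).mp ⟨l, h⟩

lemma retic_of_indeg_two (hN : N.TreeChild) {v : ℕ} (hv : v ∈ N.verts)
    (h : 2 ≤ N.indeg v) : N.IsRetic v := by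
  rcases hN.1.2.2.2.1 v hv with h' | h' | h' | h'
  · exact absurd h'.2.1 (by omega)
  · exact absurd h'.2.1 (by omega)
  · exact absurd h'.2.1 (by omega)
  · exact h'

lemma leaf_not_retic {N : Net X} {v : ℕ} (h : N.IsLeaf v) : ¬ N.IsRetic v := by
  intro hr; have := h.2.1; have := hr.2.1; omega

lemma tree_not_retic {N : Net X} {v : ℕ} (h : N.IsTreeNode v) : ¬ N.IsRetic v := by
  intro hr; have := h.2.1; have := hr.2.1; omega

/-- Tail of a reticulation edge is a tree node whose other child is not a reticulation. -/
lemma tc_tail (hN : N.TreeChild) {u ρ : ℕ} (h : (u, ρ) ∈ N.edges) (hρ : N.IsRetic ρ) :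
    N.indeg u = 1 ∧ N.outdeg u = 2 ∧
    ∃ z, (u, z) ∈ N.edges ∧ z ≠ ρ ∧ ¬ N.IsRetic z ∧ outE N u = {(u, ρ), (u, z)} := by
  have hu : u ∈ N.verts := (edge_verts hN h).1
  have hnl : ¬ N.IsLeaf u := by
    intro hl
    exact no_out_of_zero hl.2.2 h
  obtain ⟨c, hc1, hc2⟩ := hN.2 u hu hnl
  have hcρ : c ≠ ρ := by
    intro hcc; subst hcc
    rcases hc2 with h' | h'
    · exact tree_not_retic h' hρ
    · exact leaf_not_retic h' hρ
  rcases classify hN hu with hd | hd | hd | hd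
  · exact absurd (out_unique hd.2 h hc1) (Ne.symm hcρ)
  · exact absurd hd.2 (fun h0 => no_out_of_zero h0 h)
  · refine ⟨hd.1, hd.2, c, hc1, hcρ, ?_, outE_pair hd.2 h hc1 (Ne.symm hcρ)⟩
    intro hcr
    rcases hc2 with h' | h'
    · exact tree_not_retic h' hcr
    · exact leaf_not_retic h' hcr
  · exact absurd (out_unique hd.2 h hc1) (Ne.symm hcρ)

/-- The child of a reticulation is not a reticulation. -/
lemma tc_retic_child (hN : N.TreeChild) {ρ : ℕ} (hρ : N.IsRetic ρ) :
    ∃ c, (ρ, c) ∈ N.edges ∧ ¬ N.IsRetic c ∧ outE N ρ = {(ρ, c)} := by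
  have hnl : ¬ N.IsLeaf ρ := fun hl => leaf_not_retic hl hρ
  obtain ⟨c, hc1, hc2⟩ := hN.2 ρ hρ.1 hnl
  refine ⟨c, hc1, ?_, outE_singleton hρ.2.2 hc1⟩
  intro hcr
  rcases hc2 with h' | h'
  · exact tree_not_retic h' hcr
  · exact leaf_not_retic h' hcr

lemma leaf_parent (hN : N.TreeChild) {x : ℕ} (hx : N.IsLeaf x) :
    ∃ p, (p, x) ∈ N.edges ∧ inE N x = {(p, x)} := by
  obtain ⟨p, hp⟩ := in_exists hx.2.1
  exact ⟨p, hp, inE_singleton hx.2.1 hp⟩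

/-- A node with two distinct children has exactly those children. -/
lemma children_pair (hN : N.TreeChild) {w a b : ℕ} (ha : (w, a) ∈ N.edges)
    (hb : (w, b) ∈ N.edges) (hab : a ≠ b) :
    N.outdeg w = 2 ∧ outE N w = {(w, a), (w, b)} ∧ ¬ N.IsRetic w ∧
    ∀ c, (w, c) ∈ N.edges → c = a ∨ c = b := by
  have hw : w ∈ N.verts := (edge_verts hN ha).1
  have h2 : 2 ≤ N.outdeg w := two_out ha hb hab
  have hle := outdeg_le_two hN hw
  have heq : N.outdeg w = 2 := by omega
  have hpair := outE_pair heq ha hb hab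
  refine ⟨heq, hpair, ?_, ?_⟩
  · intro hr; have := hr.2.2; omega
  · intro c hc
    have : (w, c) ∈ outE N w := mem_outE.mpr hc
    rw [hpair] at this
    rcases Finset.mem_insert.mp this with h' | h'
    · exact Or.inl (congrArg Prod.snd h')
    · rw [Finset.mem_singleton] at h'
      exact Or.inr (congrArg Prod.snd h')

end Network

end CPf
namespace CPf
open Relation

variable {X : Type}

/-! ### The graph with a set of reticulation edges deleted -/

section DelE

variable (N : Net X) (E : Finset (ℕ × ℕ))

/-- Suppressible node: indegree and outdegree 1 in `N.deleteEdges E`. -/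
def Sp (v : ℕ) : Prop :=
  (N.deleteEdges E).indeg v = 1 ∧ (N.deleteEdges E).outdeg v = 1

variable {N E}

lemma mem_del {a b : ℕ} :
    (a, b) ∈ (N.deleteEdges E).edges ↔ (a, b) ∈ N.edges ∧ (a, b) ∉ E := Finset.mem_sdiff

lemma del_sub {a b : ℕ} (h : (a, b) ∈ (N.deleteEdges E).edges) : (a, b) ∈ N.edges :=
  (mem_del.mp h).1

lemma mem_del_of_nonretic (hE : ∀ e ∈ E, N.IsReticEdge e) {a b : ℕ}
    (h : (a, b) ∈ N.edges) (hb : ¬ N.IsRetic b) : (a, b) ∈ (N.deleteEdges E).edges :=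
  mem_del.mpr ⟨h, fun hmem => hb (hE _ hmem).2⟩

lemma inE_del_subset {v : ℕ} : inE (N.deleteEdges E) v ⊆ inE N v := by
  intro e he
  obtain ⟨h1, h2⟩ := inE_mem_snd he
  exact Finset.mem_filter.mpr ⟨Finset.mem_sdiff.mp h1 |>.1, h2⟩

lemma outE_del_subset {v : ℕ} : outE (N.deleteEdges E) v ⊆ outE N v := by
  intro e he
  obtain ⟨h1, h2⟩ := outE_mem_fst he
  exact Finset.mem_filter.mpr ⟨Finset.mem_sdiff.mp h1 |>.1, h2⟩

lemma inE_del_eq {v : ℕ} (h : ∀ e ∈ E, e.2 ≠ v) : inE (N.deleteEdges E) v = inE N v := by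
  apply Finset.Subset.antisymm inE_del_subset
  intro e he
  obtain ⟨h1, h2⟩ := inE_mem_snd he
  refine Finset.mem_filter.mpr ⟨Finset.mem_sdiff.mpr ⟨h1, fun hmem => h e hmem h2⟩, h2⟩

lemma outE_del_eq {v : ℕ} (h : ∀ e ∈ E, e.1 ≠ v) : outE (N.deleteEdges E) v = outE N v := by
  apply Finset.Subset.antisymm outE_del_subset
  intro e he
  obtain ⟨h1, h2⟩ := outE_mem_fst he
  refine Finset.mem_filter.mpr ⟨Finset.mem_sdiff.mpr ⟨h1, fun hmem => h e hmem h2⟩, h2⟩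

lemma sp_not_endpoint (hN : N.TreeChild) {v : ℕ} (hv : v ∈ N.verts)
    (h : ∀ e ∈ E, e.1 ≠ v ∧ e.2 ≠ v) : ¬ Sp N E v := by
  intro hsp
  have h1 : (N.deleteEdges E).indeg v = N.indeg v := by
    rw [indeg_def, indeg_def, inE_del_eq (fun e he => (h e he).2)]
  have h2 : (N.deleteEdges E).outdeg v = N.outdeg v := by
    rw [outdeg_def, outdeg_def, outE_del_eq (fun e he => (h e he).1)]
  exact not_one_one hN hv ⟨by rw [← h1]; exact hsp.1, by rw [← h2]; exact hsp.2⟩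

lemma sp_mem_verts (hN : N.TreeChild) {v : ℕ} (hsp : Sp N E v) : v ∈ N.verts := by
  obtain ⟨a, ha⟩ := in_exists hsp.1
  exact (edge_verts hN (del_sub ha)).2

lemma sp_endpoint (hN : N.TreeChild) {v : ℕ} (hsp : Sp N E v) :
    ∃ e ∈ E, e.1 = v ∨ e.2 = v := by
  by_contra h
  push_neg at h
  exact sp_not_endpoint hN (sp_mem_verts hN hsp)
    (fun e he => ⟨(h e he).1, (h e he).2⟩) hsp

lemma leaf_not_sp (hN : N.TreeChild) {v : ℕ} (hv : N.IsLeaf v) : ¬ Sp N E v := by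
  intro hsp
  obtain ⟨c, hc⟩ := out_exists hsp.2
  exact no_out_of_zero hv.2.2 (del_sub hc)

/-- Structure of a suppressible node: unique in- and out-edge, non-reticulate child. -/
lemma sp_struct (hN : N.TreeChild) (hE : ∀ e ∈ E, N.IsReticEdge e) {v : ℕ} (hsp : Sp N E v) :
    ∃ a c, (a, v) ∈ (N.deleteEdges E).edges ∧ (v, c) ∈ (N.deleteEdges E).edges ∧
      inE (N.deleteEdges E) v = {(a, v)} ∧ outE (N.deleteEdges E) v = {(v, c)} ∧
      ¬ N.IsRetic c ∧ v ∈ N.verts ∧ c ∈ N.verts ∧ a ∈ N.verts := by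
  obtain ⟨a, ha⟩ := in_exists hsp.1
  obtain ⟨c, hc⟩ := out_exists hsp.2
  have hv : v ∈ N.verts := (edge_verts hN (del_sub ha)).2
  have hcN : c ∈ N.verts := (edge_verts hN (del_sub hc)).2
  have haN : a ∈ N.verts := (edge_verts hN (del_sub ha)).1
  refine ⟨a, c, ha, hc, inE_singleton hsp.1 ha, outE_singleton hsp.2 hc, ?_, hv, hcN, haN⟩
  rcases classify hN hv with hd | hd | hd | hd
  · exact absurd (del_sub ha) (fun h => no_in_of_zero hd.1 h)
  · exact absurd (del_sub hc) (fun h => no_out_of_zero hd.2 h)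
  · -- tree node: one out-edge was deleted, it goes to the unique retic child
    have hsub : outE (N.deleteEdges E) v ⊆ outE N v := outE_del_subset
    have hlt : (outE (N.deleteEdges E) v).card < (outE N v).card := by
      rw [← outdeg_def, ← outdeg_def, hd.2, hsp.2]; omega
    have : ∃ e ∈ outE N v, e ∉ outE (N.deleteEdges E) v := by
      by_contra hcon
      push_neg at hcon
      exact absurd (Finset.card_le_card (fun e he => hcon e he)) (by omega)
    obtain ⟨e, he1, he2⟩ := this
    obtain ⟨heN, hefst⟩ := outE_mem_fst he1
    have heE : e ∈ E := by
      by_contra heE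
      exact he2 (Finset.mem_filter.mpr ⟨Finset.mem_sdiff.mpr ⟨heN, heE⟩, hefst⟩)
    have hretic : N.IsRetic e.2 := (hE e heE).2
    have heN' : (v, e.2) ∈ N.edges := by rwa [← hefst, Prod.mk.eta]
    obtain ⟨-, -, z, hz1, hz2, hz3, hz4⟩ := tc_tail hN heN' hretic
    have : (v, c) ∈ outE N v := mem_outE.mpr (del_sub hc)
    rw [hz4] at this
    rcases Finset.mem_insert.mp this with h' | h'
    · -- c = e.2, but (v, e.2) ∈ E, contradiction
      exfalso
      have hc2 : c = e.2 := congrArg Prod.snd h'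
      apply (mem_del.mp hc).2
      rw [hc2, ← hefst, Prod.mk.eta]
      exact heE
    · rw [Finset.mem_singleton] at h'
      have : c = z := congrArg Prod.snd h'
      rwa [this]
  · -- reticulation: child is unique and non-retic
    obtain ⟨c', hc'1, hc'2, hc'3⟩ := tc_retic_child hN ⟨hv, hd.1, hd.2⟩
    have : (v, c) ∈ outE N v := mem_outE.mpr (del_sub hc)
    rw [hc'3, Finset.mem_singleton] at this
    have : c = c' := congrArg Prod.snd this
    rwa [this]

end DelE

end CPf
namespace CPf
open Relation

variable {X : Type}

section Machine

variable (N : Net X) (E : Finset (ℕ × ℕ))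

/-- One step of a contracted chain: a deleted-graph edge into a removed node. -/
def Mid (G : Net X) : ℕ → ℕ → Prop :=
  fun p q => (p, q) ∈ (N.deleteEdges E).edges ∧ q ∉ G.verts

/-- `b` is reachable from `a` through removed nodes, ending with an edge into `b`. -/
def PT (G : Net X) (a b : ℕ) : Prop :=
  ∃ d, Relation.ReflTransGen (Mid N E G) a d ∧ (d, b) ∈ (N.deleteEdges E).edges

/-- Invariant preserved by clean-up steps, starting from `N.deleteEdges E`. -/
def Inv (G : Net X) : Prop :=
  G.lab = N.lab ∧ G.verts ⊆ N.verts ∧ (∀ v ∈ N.verts, v ∉ G.verts → Sp N E v) ∧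
  ∀ a b : ℕ, (a, b) ∈ G.edges ↔ (a ∈ G.verts ∧ b ∈ G.verts ∧ PT N E G a b)

variable {N E}
variable {G : Net X}

lemma rtg_mid_N (h : Relation.ReflTransGen (Mid N E G) a d) :
    Relation.ReflTransGen N.Edge a d :=
  Relation.ReflTransGen.mono (r := Mid N E G) (p := N.Edge) (fun _ _ hm => del_sub hm.1) _ _ h

lemma pt_transGen {a b : ℕ} (h : PT N E G a b) : Relation.TransGen N.Edge a b := by
  obtain ⟨d, h1, h2⟩ := h
  exact Relation.TransGen.tail' (rtg_mid_N h1) (del_sub h2)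

lemma no_pt_self (hN : N.TreeChild) {a : ℕ} (h : PT N E G a a) : False :=
  acyc hN a (pt_transGen h)

lemma chain_last_not_mem {a d : ℕ} (h : Relation.ReflTransGen (Mid N E G) a d)
    (hne : a ≠ d) : d ∉ G.verts := by
  rcases h.cases_tail with h' | ⟨b, _, hb2⟩
  · exact absurd h'.symm hne
  · exact hb2.2

/-- descendants measure -/
def dm (N : Net X) (c : ℕ) : ℕ := (N.verts.filter fun w => Relation.TransGen N.Edge c w).card

lemma dm_lt (hN : N.TreeChild) {c c₂ : ℕ} (h : (c, c₂) ∈ N.edges) : dm N c₂ < dm N c := by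
  apply Finset.card_lt_card
  rw [Finset.ssubset_iff_of_subset]
  · refine ⟨c₂, Finset.mem_filter.mpr ⟨(edge_verts hN h).2, Relation.TransGen.single h⟩, ?_⟩
    intro hc
    exact acyc hN c₂ (Finset.mem_filter.mp hc).2
  · intro w hw
    obtain ⟨hw1, hw2⟩ := Finset.mem_filter.mp hw
    exact Finset.mem_filter.mpr ⟨hw1, Relation.TransGen.head h hw2⟩

/-- ancestors measure -/
def am (N : Net X) (c : ℕ) : ℕ := (N.verts.filter fun w => Relation.TransGen N.Edge w c).card

lemma am_lt (hN : N.TreeChild) {a₂ a : ℕ} (h : (a₂, a) ∈ N.edges) : am N a₂ < am N a := by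
  apply Finset.card_lt_card
  rw [Finset.ssubset_iff_of_subset]
  · refine ⟨a₂, Finset.mem_filter.mpr ⟨(edge_verts hN h).1, Relation.TransGen.single h⟩, ?_⟩
    intro hc
    exact acyc hN a₂ (Finset.mem_filter.mp hc).2
  · intro w hw
    obtain ⟨hw1, hw2⟩ := Finset.mem_filter.mp hw
    exact Finset.mem_filter.mpr ⟨hw1, Relation.TransGen.tail hw2 h⟩

lemma chain_down (hN : N.TreeChild) (hE : ∀ e ∈ E, N.IsReticEdge e) (hG : Inv N E G) :
    ∀ c, c ∈ N.verts → c ∉ G.verts →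
    ∃ d b, Relation.ReflTransGen (Mid N E G) c d ∧ (d, b) ∈ (N.deleteEdges E).edges ∧
      b ∈ G.verts := by
  suffices H : ∀ n c, dm N c = n → c ∈ N.verts → c ∉ G.verts →
      ∃ d b, Relation.ReflTransGen (Mid N E G) c d ∧ (d, b) ∈ (N.deleteEdges E).edges ∧
        b ∈ G.verts by
    exact fun c h1 h2 => H (dm N c) c rfl h1 h2
  intro n
  induction n using Nat.strong_induction_on with
  | _ n ih =>
    intro c hdm hc1 hc2
    have hsp : Sp N E c := hG.2.2.1 c hc1 hc2
    obtain ⟨-, c₂, -, hcc₂, -, -, -, -, hc₂N, -⟩ := sp_struct hN hE hsp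
    by_cases hmem : c₂ ∈ G.verts
    · exact ⟨c, c₂, Relation.ReflTransGen.refl, hcc₂, hmem⟩
    · obtain ⟨d, b, hch, hdb, hb⟩ :=
        ih (dm N c₂) (by rw [← hdm]; exact dm_lt hN (del_sub hcc₂)) c₂ rfl hc₂N hmem
      exact ⟨d, b, Relation.ReflTransGen.head ⟨hcc₂, hmem⟩ hch, hdb, hb⟩

lemma chain_up (hN : N.TreeChild) (hE : ∀ e ∈ E, N.IsReticEdge e) (hG : Inv N E G) :
    ∀ a, a ∈ N.verts → a ∉ G.verts →
    ∃ a', a' ∈ G.verts ∧ Relation.ReflTransGen (Mid N E G) a' a := by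
  suffices H : ∀ n a, am N a = n → a ∈ N.verts → a ∉ G.verts →
      ∃ a', a' ∈ G.verts ∧ Relation.ReflTransGen (Mid N E G) a' a by
    exact fun a h1 h2 => H (am N a) a rfl h1 h2
  intro n
  induction n using Nat.strong_induction_on with
  | _ n ih =>
    intro a hdm ha1 ha2
    have hsp : Sp N E a := hG.2.2.1 a ha1 ha2
    obtain ⟨a₂, -, ha₂a, -, -, -, -, -, -, ha₂N⟩ := sp_struct hN hE hsp
    by_cases hmem : a₂ ∈ G.verts
    · exact ⟨a₂, hmem, Relation.ReflTransGen.single ⟨ha₂a, ha2⟩⟩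
    · obtain ⟨a', ha', hch⟩ :=
        ih (am N a₂) (by rw [← hdm]; exact am_lt hN (del_sub ha₂a)) a₂ rfl ha₂N hmem
      exact ⟨a', ha', Relation.ReflTransGen.tail hch ⟨ha₂a, ha2⟩⟩

lemma g_edge_of_out (hN : N.TreeChild) (hE : ∀ e ∈ E, N.IsReticEdge e) (hG : Inv N E G)
    {v c : ℕ} (hv : v ∈ G.verts) (hc : (v, c) ∈ (N.deleteEdges E).edges) :
    ∃ b, (v, b) ∈ G.edges := by
  by_cases hmem : c ∈ G.verts
  · exact ⟨c, (hG.2.2.2 v c).mpr ⟨hv, hmem, v, Relation.ReflTransGen.refl, hc⟩⟩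
  · obtain ⟨d, b, hch, hdb, hb⟩ :=
      chain_down hN hE hG c (edge_verts hN (del_sub hc)).2 hmem
    exact ⟨b, (hG.2.2.2 v b).mpr
      ⟨hv, hb, d, Relation.ReflTransGen.head ⟨hc, hmem⟩ hch, hdb⟩⟩

lemma g_edge_of_in (hN : N.TreeChild) (hE : ∀ e ∈ E, N.IsReticEdge e) (hG : Inv N E G)
    {a v : ℕ} (hv : v ∈ G.verts) (ha : (a, v) ∈ (N.deleteEdges E).edges) :
    ∃ a', (a', v) ∈ G.edges := by
  by_cases hmem : a ∈ G.verts
  · exact ⟨a, (hG.2.2.2 a v).mpr ⟨hmem, hv, a, Relation.ReflTransGen.refl, ha⟩⟩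
  · obtain ⟨a', ha', hch⟩ := chain_up hN hE hG a (edge_verts hN (del_sub ha)).1 hmem
    exact ⟨a', (hG.2.2.2 a' v).mpr ⟨ha', hv, a, hch, ha⟩⟩

lemma mid_back_unique (hN : N.TreeChild) (hG : Inv N E G) {p p' q : ℕ}
    (h : Mid N E G p q) (h' : Mid N E G p' q) : p = p' := by
  have hqN : q ∈ N.verts := (edge_verts hN (del_sub h.1)).2
  have hsp : Sp N E q := hG.2.2.1 q hqN h.2
  exact in_unique hsp.1 h.1 h'.1

lemma back_uniq (hN : N.TreeChild) (hG : Inv N E G) {d c c' : ℕ}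
    (h : Relation.ReflTransGen (Mid N E G) c d) (h' : Relation.ReflTransGen (Mid N E G) c' d) :
    Relation.ReflTransGen (Mid N E G) c c' ∨ Relation.ReflTransGen (Mid N E G) c' c := by
  induction h using Relation.ReflTransGen.head_induction_on with
  | refl => exact Or.inr h'
  | head hstep hrest ih =>
    rcases ih with h1 | h1
    · exact Or.inl (Relation.ReflTransGen.head hstep h1)
    · rcases h1.cases_tail with heq | ⟨t, ht1, ht2⟩
      · rw [heq] at hstep
        exact Or.inl (Relation.ReflTransGen.single hstep)
      · have := mid_back_unique hN hG hstep ht2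
        rw [this]
        exact Or.inr ht1

lemma fwd_step_unique (hN : N.TreeChild) (hG : Inv N E G) {p q q' : ℕ}
    (hp : p ∉ G.verts ∨ (N.deleteEdges E).outdeg p = 1)
    (h : Mid N E G p q) (h' : Mid N E G p q') : q = q' := by
  rcases hp with hp | hp
  · have hpN : p ∈ N.verts := (edge_verts hN (del_sub h.1)).1
    have hsp : Sp N E p := hG.2.2.1 p hpN hp
    exact out_unique hsp.2 h.1 h'.1
  · exact out_unique hp h.1 h'.1

lemma fwd_uniq (hN : N.TreeChild) (hG : Inv N E G) {c d d' : ℕ}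
    (h : Relation.ReflTransGen (Mid N E G) c d) (h' : Relation.ReflTransGen (Mid N E G) c d')
    (hc : c ∉ G.verts ∨ (N.deleteEdges E).outdeg c = 1) :
    Relation.ReflTransGen (Mid N E G) d d' ∨ Relation.ReflTransGen (Mid N E G) d' d := by
  revert h' hc
  induction h using Relation.ReflTransGen.head_induction_on with
  | refl => exact fun h' _ => Or.inl h'
  | @head a q hstep hrest ih =>
    intro h' hc
    rcases h'.cases_head with heq | ⟨q', hq'1, hq'2⟩
    · rw [← heq]
      exact Or.inr (Relation.ReflTransGen.head hstep hrest)
    · have hqq : q = q' := fwd_step_unique hN hG hc hstep hq'1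
      exact ih (by rw [hqq]; exact hq'2) (Or.inl hstep.2)

end Machine

end CPf
namespace CPf
open Relation

variable {X : Type}

section Machine2

variable {N : Net X} {E : Finset (ℕ × ℕ)} {G : Net X}

lemma chain_start_cases {v d : ℕ} (h : Relation.ReflTransGen (Mid N E G) v d) :
    v = d ∨ d ∉ G.verts := by
  by_cases hvd : v = d
  · exact Or.inl hvd
  · exact Or.inr (chain_last_not_mem h hvd)

/-- out-degree-one of the last chain node -/
lemma chain_end_outdeg (hN : N.TreeChild) (hG : Inv N E G) {v d b : ℕ}
    (hsp : Sp N E v) (ch : Relation.ReflTransGen (Mid N E G) v d)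
    (hd : (d, b) ∈ (N.deleteEdges E).edges) : (N.deleteEdges E).outdeg d = 1 := by
  rcases chain_start_cases ch with h' | h'
  · rw [← h']; exact hsp.2
  · exact (hG.2.2.1 d (edge_verts hN (del_sub hd)).1 h').2

/-- A suppressible node still present has in/out degree one in `G`. -/
lemma spDeg (hN : N.TreeChild) (hE : ∀ e ∈ E, N.IsReticEdge e) (hG : Inv N E G)
    {v : ℕ} (hsp : Sp N E v) (hv : v ∈ G.verts) : G.indeg v = 1 ∧ G.outdeg v = 1 := by
  obtain ⟨a0, c0, ha0, hc0, hinS, houtS, hc0nr, hvN, hc0N, ha0N⟩ := sp_struct hN hE hsp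
  obtain ⟨a', ha'⟩ := g_edge_of_in hN hE hG hv ha0
  obtain ⟨b', hb'⟩ := g_edge_of_out hN hE hG hv hc0
  constructor
  · rw [indeg_def, Finset.card_eq_one]
    refine ⟨(a', v), Finset.eq_singleton_iff_unique_mem.mpr ⟨mem_inE.mpr ha', ?_⟩⟩
    intro e he
    obtain ⟨heG, he2⟩ := inE_mem_snd he
    have heG' : (e.1, v) ∈ G.edges := by rwa [← he2, Prod.mk.eta]
    have h : e.1 = a' := by
      obtain ⟨-, -, d1, ch1, hd1⟩ := (hG.2.2.2 e.1 v).mp heG'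
      obtain ⟨-, -, d2, ch2, hd2⟩ := (hG.2.2.2 a' v).mp ha'
      have hd12 : d1 = d2 := in_unique hsp.1 hd1 hd2
      rw [hd12] at ch1
      rcases back_uniq hN hG ch1 ch2 with hbu | hbu
      · rcases chain_start_cases hbu with h' | h'
        · exact h'
        · exact absurd ((hG.2.2.2 a' v).mp ha').1 h'
      · rcases chain_start_cases hbu with h' | h'
        · exact h'.symm
        · exact absurd ((hG.2.2.2 e.1 v).mp heG').1 h'
    have he' : e = (e.1, e.2) := rfl
    rw [he', h, he2]
  · rw [outdeg_def, Finset.card_eq_one]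
    refine ⟨(v, b'), Finset.eq_singleton_iff_unique_mem.mpr ⟨mem_outE.mpr hb', ?_⟩⟩
    intro e he
    obtain ⟨heG, he1⟩ := outE_mem_fst he
    have heG' : (v, e.2) ∈ G.edges := by rwa [← he1, Prod.mk.eta]
    have h : e.2 = b' := by
      obtain ⟨-, hbmem1, d1, ch1, hd1⟩ := (hG.2.2.2 v e.2).mp heG'
      obtain ⟨-, hbmem2, d2, ch2, hd2⟩ := (hG.2.2.2 v b').mp hb'
      rcases fwd_uniq hN hG ch1 ch2 (Or.inr hsp.2) with hfu | hfu
      · rcases hfu.cases_head with heq | ⟨t, ht1, ht2⟩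
        · rw [heq] at hd1
          exact out_unique (chain_end_outdeg hN hG hsp ch2 hd2) hd1 hd2
        · exfalso
          have h' : e.2 = t := out_unique (chain_end_outdeg hN hG hsp ch1 hd1) hd1 ht1.1
          rw [h'] at hbmem1
          exact ht1.2 hbmem1
      · rcases hfu.cases_head with heq | ⟨t, ht1, ht2⟩
        · rw [heq] at hd2
          exact (out_unique (chain_end_outdeg hN hG hsp ch1 hd1) hd2 hd1).symm
        · exfalso
          have h' : b' = t := out_unique (chain_end_outdeg hN hG hsp ch2 hd2) hd2 ht1.1
          rw [h'] at hbmem2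
          exact ht1.2 hbmem2
    have he' : e = (e.1, e.2) := rfl
    rw [he', h, he1]

/-- elements of chains (other than possibly the start) have non-retic children. -/
lemma chain_node_child_nonretic (hN : N.TreeChild) (hE : ∀ e ∈ E, N.IsReticEdge e)
    (hG : Inv N E G) {t c : ℕ} (ht : t ∉ G.verts) (hc : (t, c) ∈ (N.deleteEdges E).edges) :
    ¬ N.IsRetic c := by
  have hsp : Sp N E t := hG.2.2.1 t (edge_verts hN (del_sub hc)).1 ht
  obtain ⟨-, ct, -, -, -, houtt, hctnr, -, -, -⟩ := sp_struct hN hE hsp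
  have : (t, c) ∈ outE (N.deleteEdges E) t := mem_outE.mpr hc
  rw [houtt, Finset.mem_singleton] at this
  have : c = ct := congrArg Prod.snd this
  rwa [this]

/-- conversely, an in/out degree one node of `G` is suppressible. -/
lemma revSp (hN : N.TreeChild) (hE : ∀ e ∈ E, N.IsReticEdge e) (hG : Inv N E G)
    {v : ℕ} (hv : v ∈ G.verts) (h1 : G.indeg v = 1) (h2 : G.outdeg v = 1) : Sp N E v := by
  have hvN : v ∈ N.verts := hG.2.1 hv
  obtain ⟨a, haG⟩ := in_exists h1
  obtain ⟨b, hbG⟩ := out_exists h2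
  obtain ⟨-, -, d, chd, hdv⟩ := (hG.2.2.2 a v).mp haG
  obtain ⟨-, hbv, d', chd', hd'b⟩ := (hG.2.2.2 v b).mp hbG
  have hone_out : ∃ c, (v, c) ∈ (N.deleteEdges E).edges := by
    rcases chd'.cases_head with heq | ⟨q, hq1, hq2⟩
    · exact ⟨b, by rw [heq]; exact hd'b⟩
    · exact ⟨q, hq1.1⟩
  obtain ⟨c, hvc⟩ := hone_out
  have hinle : (N.deleteEdges E).indeg v ≤ 1 := by
    by_contra hcon
    push_neg at hcon
    have hle2 : (N.deleteEdges E).indeg v ≤ 2 :=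
      le_trans (Finset.card_le_card (inE_del_subset (v := v))) (indeg_le_two hN hvN)
    have heq2 : (N.deleteEdges E).indeg v = 2 := by omega
    obtain ⟨a₂, ha₂, ha₂ne, -⟩ := in_pair_exists heq2 hdv
    have key : ∀ p, (p, v) ∈ (N.deleteEdges E).edges → p ∈ G.verts := by
      intro p hp
      by_contra hpm
      apply chain_node_child_nonretic hN hE hG hpm hp
      exact retic_of_indeg_two hN hvN
        (le_trans (le_of_eq heq2.symm) (Finset.card_le_card (inE_del_subset (v := v))))
    have hGe1 : (d, v) ∈ G.edges :=
      (hG.2.2.2 d v).mpr ⟨key d hdv, hv, d, Relation.ReflTransGen.refl, hdv⟩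
    have hGe2 : (a₂, v) ∈ G.edges :=
      (hG.2.2.2 a₂ v).mpr ⟨key a₂ ha₂, hv, a₂, Relation.ReflTransGen.refl, ha₂⟩
    have := two_in hGe2 hGe1 ha₂ne
    omega
  have houtle : (N.deleteEdges E).outdeg v ≤ 1 := by
    by_contra hcon
    push_neg at hcon
    have hle2 : (N.deleteEdges E).outdeg v ≤ 2 :=
      le_trans (Finset.card_le_card (outE_del_subset (v := v))) (outdeg_le_two hN hvN)
    have heq2 : (N.deleteEdges E).outdeg v = 2 := by omega
    rw [outdeg_def] at heq2
    obtain ⟨e, f, hef, hpair⟩ := Finset.card_eq_two.mp heq2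
    have he : e ∈ outE (N.deleteEdges E) v := hpair ▸ (by simp)
    have hf : f ∈ outE (N.deleteEdges E) v := hpair ▸ (by simp)
    obtain ⟨he1, he2⟩ := outE_mem_fst he
    obtain ⟨hf1, hf2⟩ := outE_mem_fst hf
    set c₁ := e.2 with hc₁
    set c₂ := f.2 with hc₂
    have hce : (v, c₁) ∈ (N.deleteEdges E).edges := by rw [hc₁, ← he2, Prod.mk.eta]; exact he1
    have hcf : (v, c₂) ∈ (N.deleteEdges E).edges := by rw [hc₂, ← hf2, Prod.mk.eta]; exact hf1
    have hc12 : c₁ ≠ c₂ := by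
      intro hcc
      apply hef
      have h1' : e = (e.1, e.2) := rfl
      have h2' : f = (f.1, f.2) := rfl
      rw [h1', h2', he2, hf2, ← hc₁, ← hc₂, hcc]
    have hvNne : v ∉ (∅ : Finset ℕ) := by simp
    -- helper: a chain-end collision forces a contradiction
    have vNe : ∀ t : ℕ, t ∉ G.verts → t ≠ v := fun t ht => fun hh => ht (hh ▸ hv)
    by_cases hm1 : c₁ ∈ G.verts
    · by_cases hm2 : c₂ ∈ G.verts
      · have hGe1 : (v, c₁) ∈ G.edges :=
          (hG.2.2.2 v c₁).mpr ⟨hv, hm1, v, Relation.ReflTransGen.refl, hce⟩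
        have hGe2 : (v, c₂) ∈ G.edges :=
          (hG.2.2.2 v c₂).mpr ⟨hv, hm2, v, Relation.ReflTransGen.refl, hcf⟩
        have := two_out hGe1 hGe2 hc12
        omega
      · obtain ⟨d₂, b₂, hch₂, hdb₂, hbm₂⟩ :=
          chain_down hN hE hG c₂ (edge_verts hN (del_sub hcf)).2 hm2
        have hGe1 : (v, c₁) ∈ G.edges :=
          (hG.2.2.2 v c₁).mpr ⟨hv, hm1, v, Relation.ReflTransGen.refl, hce⟩
        have hGe2 : (v, b₂) ∈ G.edges := (hG.2.2.2 v b₂).mpr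
          ⟨hv, hbm₂, d₂, Relation.ReflTransGen.head ⟨hcf, hm2⟩ hch₂, hdb₂⟩
        by_cases hbb : c₁ = b₂
        · -- b₂ = c₁ has two parents v uand d₂, retic, but child of Sp node
          have hd₂nm : d₂ ∉ G.verts := by
            rcases chain_start_cases hch₂ with h' | h'
            · rw [← h']; exact hm2
            · exact h'
          apply chain_node_child_nonretic hN hE hG hd₂nm hdb₂
          apply retic_of_indeg_two hN (edge_verts hN (del_sub hdb₂)).2
          refine le_trans (two_in (G := N) (del_sub (hbb ▸ hce)) (del_sub hdb₂)
            (Ne.symm (vNe d₂ hd₂nm))) (le_refl _)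
        · have := two_out hGe1 hGe2 hbb
          omega
    · obtain ⟨d₁, b₁, hch₁, hdb₁, hbm₁⟩ :=
        chain_down hN hE hG c₁ (edge_verts hN (del_sub hce)).2 hm1
      have hd₁nm : d₁ ∉ G.verts := by
        rcases chain_start_cases hch₁ with h' | h'
        · rw [← h']; exact hm1
        · exact h'
      have hGe1 : (v, b₁) ∈ G.edges := (hG.2.2.2 v b₁).mpr
        ⟨hv, hbm₁, d₁, Relation.ReflTransGen.head ⟨hce, hm1⟩ hch₁, hdb₁⟩
      by_cases hm2 : c₂ ∈ G.verts
      · have hGe2 : (v, c₂) ∈ G.edges :=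
          (hG.2.2.2 v c₂).mpr ⟨hv, hm2, v, Relation.ReflTransGen.refl, hcf⟩
        by_cases hbb : b₁ = c₂
        · apply chain_node_child_nonretic hN hE hG hd₁nm hdb₁
          apply retic_of_indeg_two hN (edge_verts hN (del_sub hdb₁)).2
          exact two_in (G := N) (del_sub hdb₁) (del_sub (hbb ▸ hcf)) (vNe d₁ hd₁nm)
        · have := two_out hGe1 hGe2 hbb
          omega
      · obtain ⟨d₂, b₂, hch₂, hdb₂, hbm₂⟩ :=
          chain_down hN hE hG c₂ (edge_verts hN (del_sub hcf)).2 hm2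
        have hd₂nm : d₂ ∉ G.verts := by
          rcases chain_start_cases hch₂ with h' | h'
          · rw [← h']; exact hm2
          · exact h'
        have hGe2 : (v, b₂) ∈ G.edges := (hG.2.2.2 v b₂).mpr
          ⟨hv, hbm₂, d₂, Relation.ReflTransGen.head ⟨hcf, hm2⟩ hch₂, hdb₂⟩
        by_cases hbb : b₁ = b₂
        · -- common end b; show d₁ = d₂ then chains comparable then contradiction
          by_cases hdd : d₁ = d₂
          · rw [hdd] at hch₁
            rcases back_uniq hN hG hch₁ hch₂ with hbu | hbu
            · rcases hbu.cases_tail with heqq | ⟨t, ht1, ht2⟩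
              · exact hc12 heqq.symm
              · -- t → c₂ and v → c₂ both edges, t ∉ verts
                have htnm : t ∉ G.verts := by
                  rcases chain_start_cases ht1 with h' | h'
                  · rw [← h']; exact hm1
                  · exact h'
                apply chain_node_child_nonretic hN hE hG htnm ht2.1
                apply retic_of_indeg_two hN (edge_verts hN (del_sub ht2.1)).2
                exact two_in (G := N) (del_sub ht2.1) (del_sub hcf) (vNe t htnm)
            · rcases hbu.cases_tail with heqq | ⟨t, ht1, ht2⟩
              · exact hc12 heqq
              · have htnm : t ∉ G.verts := by
                  rcases chain_start_cases ht1 with h' | h'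
                  · rw [← h']; exact hm2
                  · exact h'
                apply chain_node_child_nonretic hN hE hG htnm ht2.1
                apply retic_of_indeg_two hN (edge_verts hN (del_sub ht2.1)).2
                exact two_in (G := N) (del_sub ht2.1) (del_sub hce) (vNe t htnm)
          · -- two distinct parents d₁ d₂ of b₁
            apply chain_node_child_nonretic hN hE hG hd₁nm hdb₁
            apply retic_of_indeg_two hN (edge_verts hN (del_sub hdb₁)).2
            exact two_in (G := N) (del_sub hdb₁) (del_sub (hbb ▸ hdb₂)) hdd
        · have := two_out hGe1 hGe2 hbb
          omega
  exact ⟨by have := indeg_pos_of_mem hdv; omega, by have := outdeg_pos_of_mem hvc; omega⟩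

end Machine2

end CPf
namespace CPf
open Relation

variable {X : Type}

section Machine3

variable {N : Net X} {E : Finset (ℕ × ℕ)} {G : Net X}

/-- Under the invariant, no node-deletion clean-up step can apply. -/
lemma delNode_refute (hN : N.TreeChild) (hE : ∀ e ∈ E, N.IsReticEdge e) (hG : Inv N E G)
    {v : ℕ} (hv : v ∈ G.verts) (h0 : G.outdeg v = 0) (hlab : G.lab v = none) : False := by
  have hvN : v ∈ N.verts := hG.2.1 hv
  have hout : ∃ c, (v, c) ∈ (N.deleteEdges E).edges := by
    rcases classify hN hvN with hd | hd | hd | hd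
    · -- root
      obtain ⟨c, hc⟩ := out_exists hd.2
      refine ⟨c, mem_del.mpr ⟨hc, fun hmem => ?_⟩⟩
      have := (tc_tail hN hc (hE _ hmem).2).1
      omega
    · -- leaf: has a label
      exfalso
      obtain ⟨l, hl⟩ := leaf_lab hN ⟨hvN, hd.1, hd.2⟩
      rw [← hG.1] at hl
      rw [hlab] at hl
      cases hl
    · -- tree node
      have hpos : 0 < (outE N v).card := by rw [← outdeg_def, hd.2]; omega
      obtain ⟨e, he⟩ := Finset.card_pos.mp hpos
      obtain ⟨he1, he2⟩ := outE_mem_fst he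
      have hc : (v, e.2) ∈ N.edges := by rwa [← he2, Prod.mk.eta]
      by_cases hmem : (v, e.2) ∈ E
      · obtain ⟨-, -, z, hz1, hz2, hz3, -⟩ := tc_tail hN hc (hE _ hmem).2
        exact ⟨z, mem_del_of_nonretic hE hz1 hz3⟩
      · exact ⟨e.2, mem_del.mpr ⟨hc, hmem⟩⟩
    · -- retic
      obtain ⟨c, hc1, hc2, -⟩ := tc_retic_child hN ⟨hvN, hd.1, hd.2⟩
      exact ⟨c, mem_del_of_nonretic hE hc1 hc2⟩
  obtain ⟨c, hc⟩ := hout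
  obtain ⟨b, hb⟩ := g_edge_of_out hN hE hG hv hc
  exact no_out_of_zero h0 hb

/-- Preservation of the invariant under one clean-up step. -/
lemma inv_step (hN : N.TreeChild) (hE : ∀ e ∈ E, N.IsReticEdge e) (hG : Inv N E G)
    {G' : Net X} (hstep : Net.CleanStep G G') : Inv N E G' := by
  cases hstep with
  | delNode v hv h0 hlab => exact absurd (delNode_refute hN hE hG hv h0 hlab) id
  | suppress u v w h1 h2 hu hw =>
    -- basic facts
    obtain ⟨huv, hvv, hptuv⟩ := (hG.2.2.2 u v).mp hu
    obtain ⟨-, hwv, hptvw⟩ := (hG.2.2.2 v w).mp hw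
    have huvne : u ≠ v := fun h => no_pt_self hN (h ▸ hptuv)
    have hvwne : v ≠ w := fun h => no_pt_self hN (h ▸ hptvw)
    have hSpv : Sp N E v := revSp hN hE hG hvv h1 h2
    set G' : Net X := ⟨G.verts.erase v,
        insert (u, w) (G.edges.filter fun e => e.1 ≠ v ∧ e.2 ≠ v), G.lab⟩ with hG'
    have hsubv : G'.verts ⊆ G.verts := Finset.erase_subset v G.verts
    have hvG' : v ∉ G'.verts := Finset.notMem_erase v G.verts
    have midmono : ∀ p q, Mid N E G p q → Mid N E G' p q := by
      intro p q hm
      exact ⟨hm.1, fun hmem => hm.2 (hsubv hmem)⟩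
    have chainmono : ∀ a d, Relation.ReflTransGen (Mid N E G) a d →
        Relation.ReflTransGen (Mid N E G') a d :=
      fun a d h => Relation.ReflTransGen.mono (r := Mid N E G) (p := Mid N E G') (fun p q hm => midmono p q hm) _ _ h
    have ptmono : ∀ a b, PT N E G a b → PT N E G' a b := by
      rintro a b ⟨d, ch, hd⟩
      exact ⟨d, chainmono a d ch, hd⟩
    refine ⟨hG.1, le_trans hsubv hG.2.1, ?_, ?_⟩
    · intro z hz hz'
      by_cases hzv : z = v
      · rw [hzv]; exact hSpv
      · exact hG.2.2.1 z hz (fun hmem => hz' (Finset.mem_erase.mpr ⟨hzv, hmem⟩))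
    · intro a b
      constructor
      · intro hab
        rcases Finset.mem_insert.mp hab with heq | hmem
        · -- (a, b) = (u, w)
          have ha : a = u := congrArg Prod.fst heq
          have hb : b = w := congrArg Prod.snd heq
          subst ha; subst hb
          obtain ⟨d, ch, hdv⟩ := hptuv
          obtain ⟨d', ch', hd'w⟩ := hptvw
          refine ⟨Finset.mem_erase.mpr ⟨huvne, huv⟩, Finset.mem_erase.mpr ⟨Ne.symm hvwne, hwv⟩,
            d', ?_, hd'w⟩
          exact Relation.ReflTransGen.trans
            (Relation.ReflTransGen.tail (chainmono _ _ ch) ⟨hdv, hvG'⟩)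
            (chainmono _ _ ch')
        · obtain ⟨hmm, hcond⟩ := Finset.mem_filter.mp hmem
          obtain ⟨ha, hb, hpt⟩ := (hG.2.2.2 a b).mp hmm
          exact ⟨Finset.mem_erase.mpr ⟨hcond.1, ha⟩, Finset.mem_erase.mpr ⟨hcond.2, hb⟩,
            ptmono a b hpt⟩
      · rintro ⟨ha', hb', d, ch, hdb⟩
        have haerase := Finset.mem_erase.mp ha'
        have hberase := Finset.mem_erase.mp hb'
        -- eliminate the chain: either avoid v or pass through it
        have elim : ∀ a₀ d₀, Relation.ReflTransGen (Mid N E G') a₀ d₀ →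
            ∀ b₀, (d₀, b₀) ∈ (N.deleteEdges E).edges →
            PT N E G a₀ b₀ ∨ (PT N E G a₀ v ∧ PT N E G v b₀) ∨ (a₀ = v ∧ PT N E G v b₀) := by
          intro a₀ d₀ hch
          induction hch using Relation.ReflTransGen.head_induction_on with
          | refl => exact fun b₀ hb₀ => Or.inl ⟨_, Relation.ReflTransGen.refl, hb₀⟩
          | @head p q hstep1 hrest ih =>
            intro b₀ hb₀
            by_cases hqv : q = v
            · subst hqv
              have hptqb : PT N E G q b₀ := by
                rcases ih b₀ hb₀ with h | h | h
                · exact h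
                · exact absurd h.1 (fun hh => no_pt_self hN hh)
                · exact h.2
              exact Or.inr (Or.inl ⟨⟨p, Relation.ReflTransGen.refl, hstep1.1⟩, hptqb⟩)
            · have hqG : q ∉ G.verts := by
                intro hmem
                exact hstep1.2 (Finset.mem_erase.mpr ⟨hqv, hmem⟩)
              rcases ih b₀ hb₀ with h | h | h
              · obtain ⟨d₁, ch₁, hd₁⟩ := h
                exact Or.inl ⟨d₁, Relation.ReflTransGen.head ⟨hstep1.1, hqG⟩ ch₁, hd₁⟩
              · obtain ⟨⟨d₁, ch₁, hd₁⟩, h2'⟩ := h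
                exact Or.inr (Or.inl
                  ⟨⟨d₁, Relation.ReflTransGen.head ⟨hstep1.1, hqG⟩ ch₁, hd₁⟩, h2'⟩)
              · exact absurd h.1 hqv
        rcases elim a d ch b hdb with h | h | h
        · -- edge already in G, not touching v
          have : (a, b) ∈ G.edges := (hG.2.2.2 a b).mpr ⟨hsubv ha', hsubv hb', h⟩
          exact Finset.mem_insert.mpr (Or.inr (Finset.mem_filter.mpr
            ⟨this, haerase.1, hberase.1⟩))
        · -- passes through v: a = u and b = w
          obtain ⟨hav, hvb⟩ := h
          have haG : (a, v) ∈ G.edges := (hG.2.2.2 a v).mpr ⟨hsubv ha', hvv, hav⟩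
          have hbG : (v, b) ∈ G.edges := (hG.2.2.2 v b).mpr ⟨hvv, hsubv hb', hvb⟩
          have hau : a = u := in_unique h1 haG hu
          have hbw : b = w := out_unique h2 hbG hw
          rw [hau, hbw]
          exact Finset.mem_insert_self _ _
        · exact absurd h.1 haerase.1

/-- The invariant holds for the initial deleted graph. -/
lemma inv_init (hN : N.TreeChild) : Inv N E (N.deleteEdges E) := by
  refine ⟨rfl, Finset.Subset.refl _, fun v hv hv' => absurd hv hv', ?_⟩
  intro a b
  constructor
  · intro h
    exact ⟨(edge_verts hN (del_sub h)).1, (edge_verts hN (del_sub h)).2,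
      a, Relation.ReflTransGen.refl, h⟩
  · rintro ⟨ha, hb, d, ch, hd⟩
    rcases ch.cases_head with heq | ⟨q, hq1, hq2⟩
    · rw [heq]; exact hd
    · exact absurd (edge_verts hN (del_sub hq1.1)).2 hq1.2

lemma inv_rtg (hN : N.TreeChild) (hE : ∀ e ∈ E, N.IsReticEdge e) {G M : Net X}
    (hG : Inv N E G) (h : Relation.ReflTransGen Net.CleanStep G M) : Inv N E M := by
  induction h with
  | refl => exact hG
  | tail _ hstep ih => exact inv_step hN hE ih hstep

/-- measure for termination -/
def mu (G : Net X) : ℕ := G.verts.card + G.edges.card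

lemma mu_decr (hN : N.TreeChild) (hG : Inv N E G) {G' : Net X}
    (hstep : Net.CleanStep G G') : mu G' < mu G := by
  cases hstep with
  | delNode v hv h0 hlab =>
    have h1 : (G.verts.erase v).card < G.verts.card := Finset.card_erase_lt_of_mem hv
    have h2 : (G.edges.filter fun e => e.1 ≠ v ∧ e.2 ≠ v).card ≤ G.edges.card :=
      Finset.card_le_card (Finset.filter_subset _ _)
    simp only [mu, Net.deleteNode]
    omega
  | suppress u v w h1 h2 hu hw =>
    obtain ⟨huv, hvv, hptuv⟩ := (hG.2.2.2 u v).mp hu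
    obtain ⟨-, hwv, hptvw⟩ := (hG.2.2.2 v w).mp hw
    have huvne : u ≠ v := fun h => no_pt_self hN (h ▸ hptuv)
    have hvwne : v ≠ w := fun h => no_pt_self hN (h ▸ hptvw)
    have hpairne : ((u, v) : ℕ × ℕ) ≠ (v, w) := by
      intro h
      exact huvne (congrArg Prod.fst h)
    have hpairsub : ({(u, v), (v, w)} : Finset (ℕ × ℕ)) ⊆ G.edges := by
      intro e he
      rcases Finset.mem_insert.mp he with h' | h'
      · rw [h']; exact hu
      · rw [Finset.mem_singleton] at h'; rw [h']; exact hw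
    have hfilter : (G.edges.filter fun e => e.1 ≠ v ∧ e.2 ≠ v) ⊆
        G.edges \ {(u, v), (v, w)} := by
      intro e he
      obtain ⟨he1, he2⟩ := Finset.mem_filter.mp he
      refine Finset.mem_sdiff.mpr ⟨he1, ?_⟩
      intro hmem
      rcases Finset.mem_insert.mp hmem with h' | h'
      · rw [h'] at he2; exact he2.2 rfl
      · rw [Finset.mem_singleton] at h'; rw [h'] at he2; exact he2.1 rfl
    have hcard1 : (G.edges \ {(u, v), (v, w)}).card = G.edges.card - 2 := by
      rw [Finset.card_sdiff_of_subset hpairsub]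
      congr 1
      rw [Finset.card_insert_of_notMem (by simp [hpairne]), Finset.card_singleton]
    have hge2 : 2 ≤ G.edges.card := by
      calc 2 = ({(u, v), (v, w)} : Finset (ℕ × ℕ)).card := by
              rw [Finset.card_insert_of_notMem (by simp [hpairne]), Finset.card_singleton]
        _ ≤ G.edges.card := Finset.card_le_card hpairsub
    have hcard2 : (insert (u, w) (G.edges.filter fun e => e.1 ≠ v ∧ e.2 ≠ v)).card ≤
        (G.edges.filter fun e => e.1 ≠ v ∧ e.2 ≠ v).card + 1 := Finset.card_insert_le _ _
    have hcard3 : (G.edges.filter fun e => e.1 ≠ v ∧ e.2 ≠ v).card ≤ G.edges.card - 2 :=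
      le_trans (Finset.card_le_card hfilter) (le_of_eq hcard1)
    have hverts : (G.verts.erase v).card < G.verts.card := Finset.card_erase_lt_of_mem hvv
    simp only [mu]
    omega

/-- Termination: there is always a terminal clean-up result. -/
lemma exists_terminal (hN : N.TreeChild) (hE : ∀ e ∈ E, N.IsReticEdge e) :
    ∀ G : Net X, Inv N E G →
    ∃ M, Relation.ReflTransGen Net.CleanStep G M ∧ (∀ M', ¬ Net.CleanStep M M') ∧ Inv N E M := by
  suffices H : ∀ n (G : Net X), mu G = n → Inv N E G →
      ∃ M, Relation.ReflTransGen Net.CleanStep G M ∧ (∀ M', ¬ Net.CleanStep M M') ∧ Inv N E M by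
    exact fun G hG => H (mu G) G rfl hG
  intro n
  induction n using Nat.strong_induction_on with
  | _ n ih =>
    intro G hmu hG
    by_cases hterm : ∀ M', ¬ Net.CleanStep G M'
    · exact ⟨G, Relation.ReflTransGen.refl, hterm, hG⟩
    · push_neg at hterm
      obtain ⟨G', hG'⟩ := hterm
      obtain ⟨M, hch, ht, hi⟩ := ih (mu G') (by rw [← hmu]; exact mu_decr hN hG hG') G' rfl
        (inv_step hN hE hG hG')
      exact ⟨M, Relation.ReflTransGen.head hG' hch, ht, hi⟩

/-- In a terminal network, all suppressible nodes have been removed. -/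
lemma terminal_sp_not_mem (hN : N.TreeChild) (hE : ∀ e ∈ E, N.IsReticEdge e) {M : Net X}
    (hM : Inv N E M) (hterm : ∀ M', ¬ Net.CleanStep M M') {v : ℕ} (hsp : Sp N E v) :
    v ∉ M.verts := by
  intro hv
  obtain ⟨h1, h2⟩ := spDeg hN hE hM hsp hv
  obtain ⟨a, ha⟩ := in_exists h1
  obtain ⟨b, hb⟩ := out_exists h2
  exact hterm _ (Net.CleanStep.suppress M a v b h1 h2 ha hb)

lemma terminal_mem_iff (hN : N.TreeChild) (hE : ∀ e ∈ E, N.IsReticEdge e) {M : Net X}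
    (hM : Inv N E M) (hterm : ∀ M', ¬ Net.CleanStep M M') {v : ℕ} :
    v ∈ M.verts ↔ v ∈ N.verts ∧ ¬ Sp N E v := by
  constructor
  · intro hv
    exact ⟨hM.2.1 hv, fun hsp => terminal_sp_not_mem hN hE hM hterm hsp hv⟩
  · rintro ⟨hv, hsp⟩
    by_contra h
    exact hsp (hM.2.2.1 v hv h)

end Machine3

end CPf
namespace CPf
open Relation

variable {X : Type}

section Terminal

variable {N : Net X} {E : Finset (ℕ × ℕ)} {M : Net X}

/-- If the parent of a leaf is not suppressible, the leaf keeps exactly its parent edge. -/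
lemma leaf_trace (hN : N.TreeChild) (hE : ∀ e ∈ E, N.IsReticEdge e) (hM : Inv N E M)
    (hterm : ∀ M', ¬ Net.CleanStep M M') {x px : ℕ} (hx : N.IsLeaf x)
    (hpx : (px, x) ∈ N.edges) (hpxsp : ¬ Sp N E px) :
    x ∈ M.verts ∧ (px, x) ∈ M.edges ∧ (∀ a, (a, x) ∈ M.edges → a = px) ∧
      M.indeg x = 1 ∧ M.outdeg x = 0 := by
  have hxnsp : ¬ Sp N E x := leaf_not_sp hN hx
  have hxm : x ∈ M.verts := (terminal_mem_iff hN hE hM hterm).mpr ⟨hx.1, hxnsp⟩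
  have hpxN : px ∈ N.verts := (edge_verts hN hpx).1
  have hpxm : px ∈ M.verts := (terminal_mem_iff hN hE hM hterm).mpr ⟨hpxN, hpxsp⟩
  have hxnr : ¬ N.IsRetic x := leaf_not_retic hx
  have hdel : (px, x) ∈ (N.deleteEdges E).edges := mem_del_of_nonretic hE hpx hxnr
  have hMe : (px, x) ∈ M.edges :=
    (hM.2.2.2 px x).mpr ⟨hpxm, hxm, px, Relation.ReflTransGen.refl, hdel⟩
  have huniq : ∀ a, (a, x) ∈ M.edges → a = px := by
    intro a ha
    obtain ⟨-, -, d, ch, hdx⟩ := (hM.2.2.2 a x).mp ha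
    have hdpx : d = px := in_unique hx.2.1 (del_sub hdx) hpx
    rw [hdpx] at ch
    rcases chain_start_cases ch with h' | h'
    · exact h'
    · exact absurd hpxm h'
  refine ⟨hxm, hMe, huniq, ?_, ?_⟩
  · rw [indeg_def, Finset.card_eq_one]
    refine ⟨(px, x), Finset.eq_singleton_iff_unique_mem.mpr ⟨mem_inE.mpr hMe, ?_⟩⟩
    intro e' he'
    obtain ⟨h1, h2⟩ := inE_mem_snd he'
    have : (e'.1, x) ∈ M.edges := by rwa [← h2, Prod.mk.eta]
    have h3 := huniq e'.1 this
    have he'' : e' = (e'.1, e'.2) := rfl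
    rw [he'', h3, h2]
  · rw [outdeg_def, Finset.card_eq_zero]
    rw [Finset.eq_empty_iff_forall_notMem]
    intro e' he'
    obtain ⟨h1, h2⟩ := outE_mem_fst he'
    have hxe : (x, e'.2) ∈ M.edges := by rwa [← h2, Prod.mk.eta]
    obtain ⟨-, -, d, ch, hdx⟩ := (hM.2.2.2 x e'.2).mp hxe
    rcases ch.cases_head with heq | ⟨q, hq1, hq2⟩
    · exact no_out_of_zero hx.2.2 (del_sub (heq ▸ hdx))
    · exact no_out_of_zero hx.2.2 (del_sub hq1.1)

end Terminal

/-- Forward direction: a cherry is preserved by every MLLS. -/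
lemma forward_dir {N : Net X} (hN : N.TreeChild) {k : ℕ} {x y : ℕ} (hC : N.Cherry x y) :
    ∀ M, N.IsMLLS k M → M.Cherry x y := by
  intro M hM
  obtain ⟨E, hval, -, -, hclean⟩ := hM
  have hE : ∀ e ∈ E, N.IsReticEdge e := fun e he => (hval e he).1
  have hMinv : Inv N E M := inv_rtg hN hE (inv_init hN) hclean.1
  have hterm := hclean.2
  obtain ⟨hxl, hyl, hxy, p, hpx, hpy⟩ := hC
  have hpN : p ∈ N.verts := (edge_verts hN hpx).1
  obtain ⟨hodeg, houtp, hpnr, hchild⟩ := children_pair hN hpx hpy hxy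
  have hpnsp : ¬ Sp N E p := by
    apply sp_not_endpoint hN hpN
    intro e he
    constructor
    · intro h1
      have : (p, e.2) ∈ N.edges := by rw [← h1, Prod.mk.eta]; exact (hE e he).1
      rcases hchild e.2 this with h' | h'
      · exact leaf_not_retic (h' ▸ hxl) (h' ▸ (hE e he).2)
      · exact leaf_not_retic (h' ▸ hyl) (h' ▸ (hE e he).2)
    · intro h2
      have : N.IsRetic p := h2 ▸ (hE e he).2
      have := this.2.2
      omega
  obtain ⟨hxm, hex, -, hix, hox⟩ := leaf_trace hN hE hMinv hterm hxl hpx hpnsp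
  obtain ⟨hym, hey, -, hiy, hoy⟩ := leaf_trace hN hE hMinv hterm hyl hpy hpnsp
  exact ⟨⟨hxm, hix, hox⟩, ⟨hym, hiy, hoy⟩, hxy, p, hex, hey⟩

end CPf
namespace CPf
open Relation

variable {X : Type}

/-- In a binary tree-child network, every reticulation edge is valid. -/
lemma all_retic_valid {N : Net X} (hN : N.TreeChild) {e : ℕ × ℕ} (he : N.IsReticEdge e) :
    N.ValidEdge e := by
  obtain ⟨heN, her⟩ := he
  set u := e.1 with hu
  set r := e.2 with hr
  have heN' : (u, r) ∈ N.edges := by rw [hu, hr, Prod.mk.eta]; exact heN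
  set E : Finset (ℕ × ℕ) := {(u, r)} with hEdef
  have hE : ∀ e' ∈ E, N.IsReticEdge e' := by
    intro e' he'
    rw [hEdef, Finset.mem_singleton] at he'
    rw [he']
    exact ⟨heN', her⟩
  have hmemE : ((u, r) : ℕ × ℕ) ∈ E := by rw [hEdef]; exact Finset.mem_singleton_self _
  -- local structure
  have hur : u ≠ r := edge_ne hN heN'
  obtain ⟨huin, huout, z, hz1, hz2, hz3, hz4⟩ := tc_tail hN heN' her
  obtain ⟨pu, hpu⟩ := in_exists huin
  have hinEu : inE N u = {(pu, u)} := inE_singleton huin hpu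
  obtain ⟨p', hp'1, hp'2, hinEr⟩ := in_pair_exists her.2.1 heN'
  obtain ⟨cr, hcr1, hcr2, houtEr⟩ := tc_retic_child hN her
  -- inequalities
  have hpu_ne_u : pu ≠ u := edge_ne hN hpu
  have hpu_ne_r : pu ≠ r := fun h => no_two_cycle hN heN' (h ▸ hpu)
  have hz_ne_u : z ≠ u := fun h => edge_ne hN hz1 h.symm
  have hp'_ne_r : p' ≠ r := edge_ne hN hp'1
  have hcr_ne_r : cr ≠ r := fun h => edge_ne hN hcr1 h.symm
  have hcr_ne_u : cr ≠ u := fun h => no_two_cycle hN heN' (h ▸ hcr1)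
  -- key edges of the deleted graph
  have hdel_pu : (pu, u) ∈ (N.deleteEdges E).edges := by
    refine mem_del.mpr ⟨hpu, ?_⟩
    rw [hEdef, Finset.mem_singleton]
    exact fun h => hur (congrArg Prod.snd h)
  have hdel_uz : (u, z) ∈ (N.deleteEdges E).edges := by
    refine mem_del.mpr ⟨hz1, ?_⟩
    rw [hEdef, Finset.mem_singleton]
    exact fun h => hz2 (congrArg Prod.snd h)
  have hdel_p'r : (p', r) ∈ (N.deleteEdges E).edges := by
    refine mem_del.mpr ⟨hp'1, ?_⟩
    rw [hEdef, Finset.mem_singleton]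
    exact fun h => hp'2 (congrArg Prod.fst h)
  have hdel_rcr : (r, cr) ∈ (N.deleteEdges E).edges := by
    refine mem_del.mpr ⟨hcr1, ?_⟩
    rw [hEdef, Finset.mem_singleton]
    exact fun h => hur (congrArg Prod.fst h).symm
  -- in/out edge sets of u and r in the deleted graph
  have hindelu : inE (N.deleteEdges E) u = {(pu, u)} := by
    rw [inE_del_eq, hinEu]
    intro e' he'
    rw [hEdef, Finset.mem_singleton] at he'
    rw [he']
    exact Ne.symm hur
  have houtdelu : outE (N.deleteEdges E) u = {(u, z)} := by
    apply Finset.eq_singleton_iff_unique_mem.mpr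
    refine ⟨mem_outE.mpr hdel_uz, ?_⟩
    intro e' he'
    obtain ⟨h1, h2⟩ := outE_mem_fst he'
    have h3 : (u, e'.2) ∈ outE N u := mem_outE.mpr (by
      rw [← h2, Prod.mk.eta]; exact del_sub h1)
    rw [hz4] at h3
    rcases Finset.mem_insert.mp h3 with h' | h'
    · exfalso
      apply (mem_del.mp h1).2
      have he'' : e' = (e'.1, e'.2) := rfl
      rw [he'', h2, congrArg Prod.snd h']
      exact hmemE
    · rw [Finset.mem_singleton] at h'
      have he'' : e' = (e'.1, e'.2) := rfl
      rw [he'', h2, congrArg Prod.snd h']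
  have hindelr : inE (N.deleteEdges E) r = {(p', r)} := by
    apply Finset.eq_singleton_iff_unique_mem.mpr
    refine ⟨mem_inE.mpr hdel_p'r, ?_⟩
    intro e' he'
    obtain ⟨h1, h2⟩ := inE_mem_snd he'
    have h3 : (e'.1, r) ∈ inE N r := mem_inE.mpr (by
      rw [← h2, Prod.mk.eta]; exact del_sub h1)
    rw [hinEr] at h3
    rcases Finset.mem_insert.mp h3 with h' | h'
    · exfalso
      apply (mem_del.mp h1).2
      have he'' : e' = (e'.1, e'.2) := rfl
      rw [he'', h2, congrArg Prod.fst h']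
      exact hmemE
    · rw [Finset.mem_singleton] at h'
      have he'' : e' = (e'.1, e'.2) := rfl
      rw [he'', h2, congrArg Prod.fst h']
  have houtdelr : outE (N.deleteEdges E) r = {(r, cr)} := by
    rw [outE_del_eq, houtEr]
    intro e' he'
    rw [hEdef, Finset.mem_singleton] at he'
    rw [he']
    exact hur
  -- Sp characterization
  have hSpu : Sp N E u :=
    ⟨by rw [indeg_def, hindelu, Finset.card_singleton],
     by rw [outdeg_def, houtdelu, Finset.card_singleton]⟩
  have hSpr : Sp N E r :=
    ⟨by rw [indeg_def, hindelr, Finset.card_singleton],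
     by rw [outdeg_def, houtdelr, Finset.card_singleton]⟩
  have hSp_iff : ∀ v, Sp N E v ↔ v = u ∨ v = r := by
    intro v
    constructor
    · intro hsp
      by_contra h
      push_neg at h
      apply sp_not_endpoint hN (sp_mem_verts hN hsp) _ hsp
      intro e' he'
      rw [hEdef, Finset.mem_singleton] at he'
      rw [he']
      exact ⟨fun hh => h.1 hh.symm, fun hh => h.2 hh.symm⟩
    · rintro (h | h) <;> rw [h]
      · exact hSpu
      · exact hSpr
  have hE_e : E = {e} := rfl
  have hdel_eq : N.deleteEdge e = N.deleteEdges E := by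
    rw [hE_e]
    unfold Net.deleteEdge Net.deleteEdges
    rw [Finset.erase_eq]
  refine ⟨⟨heN, her⟩, ?_⟩
  intro M hclean
  rw [hdel_eq] at hclean
  have hMinv : Inv N E M := inv_rtg hN hE (inv_init hN) hclean.1
  have hterm := hclean.2
  have hmemiff : ∀ v, v ∈ M.verts ↔ v ∈ N.verts ∧ ¬(v = u ∨ v = r) := by
    intro v
    rw [terminal_mem_iff hN hE hMinv hterm, hSp_iff]
  have huN : u ∈ N.verts := (edge_verts hN heN').1
  have hrN : r ∈ N.verts := (edge_verts hN heN').2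
  have hpairsub : ({u, r} : Finset ℕ) ⊆ N.verts := by
    intro v hv
    rcases Finset.mem_insert.mp hv with h' | h'
    · rw [h']; exact huN
    · rw [Finset.mem_singleton] at h'; rw [h']; exact hrN
  have hverts : M.verts = N.verts \ {u, r} := by
    ext v
    rw [hmemiff v, Finset.mem_sdiff]
    simp only [Finset.mem_insert, Finset.mem_singleton]
  have hvcard : M.verts.card + 2 = N.verts.card := by
    rw [hverts, Finset.card_sdiff_of_subset hpairsub]
    have h2 : ({u, r} : Finset ℕ).card = 2 := by
      rw [Finset.card_insert_of_notMem (by simp [hur]), Finset.card_singleton]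
    have hle := Finset.card_le_card hpairsub
    rw [h2] at hle
    rw [h2]
    omega
  refine ⟨hvcard, ?_⟩
  -- edge count
  set E5 : Finset (ℕ × ℕ) := {(u, r), (pu, u), (u, z), (p', r), (r, cr)} with hE5
  have hE5sub : E5 ⊆ N.edges := by
    intro e' he'
    rw [hE5] at he'
    simp only [Finset.mem_insert, Finset.mem_singleton] at he'
    rcases he' with h | h | h | h | h <;> rw [h]
    exacts [heN', hpu, hz1, hp'1, hcr1]
  have hunm : u ∉ M.verts := by rw [hmemiff]; tauto
  have hrnm : r ∉ M.verts := by rw [hmemiff]; tauto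
  have notE5 : ∀ a b : ℕ, a ≠ u → a ≠ r → b ≠ u → b ≠ r → ((a, b) : ℕ × ℕ) ∉ E5 := by
    intro a b h1 h2 h3 h4 hmem
    rw [hE5] at hmem
    simp only [Finset.mem_insert, Finset.mem_singleton, Prod.mk.injEq] at hmem
    rcases hmem with ⟨h, h'⟩ | ⟨h, h'⟩ | ⟨h, h'⟩ | ⟨h, h'⟩ | ⟨h, h'⟩
    · exact h1 h
    · exact h3 h'
    · exact h1 h
    · exact h4 h'
    · exact h2 h
  have hedges : M.edges = (N.edges \ E5) ∪ {(pu, z), (p', cr)} := by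
    ext e'
    obtain ⟨a, b⟩ := e'
    constructor
    · intro hab
      obtain ⟨ham, hbm, d, ch, hdb⟩ := (hMinv.2.2.2 a b).mp hab
      have haur : ¬(a = u ∨ a = r) := ((hmemiff a).mp ham).2
      have hbur : ¬(b = u ∨ b = r) := ((hmemiff b).mp hbm).2
      push_neg at haur hbur
      rcases ch.cases_head with heq | ⟨q, hq1, hq2⟩
      · rw [← heq] at hdb
        exact Finset.mem_union_left _ (Finset.mem_sdiff.mpr ⟨del_sub hdb,
          notE5 a b haur.1 haur.2 hbur.1 hbur.2⟩)
      · have hqN : q ∈ N.verts := (edge_verts hN (del_sub hq1.1)).2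
        have hqsp : Sp N E q := hMinv.2.2.1 q hqN hq1.2
        rcases (hSp_iff q).mp hqsp with hqu | hqr
        · rw [hqu] at hq1 hq2
          rcases hq2.cases_head with heq2 | ⟨q', hq'1, hq'2⟩
          · -- d = u ; b = z, a = pu
            rw [← heq2] at hdb
            have hbz : b = z := by
              have h5 : (u, b) ∈ outE (N.deleteEdges E) u := mem_outE.mpr hdb
              rw [houtdelu, Finset.mem_singleton] at h5
              exact congrArg Prod.snd h5
            have hapu : a = pu := by
              have h5 : (a, u) ∈ inE (N.deleteEdges E) u := mem_inE.mpr hq1.1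
              rw [hindelu, Finset.mem_singleton] at h5
              exact congrArg Prod.fst h5
            rw [hbz, hapu]
            exact Finset.mem_union_right _ (by simp)
          · exfalso
            have h5 : (u, q') ∈ outE (N.deleteEdges E) u := mem_outE.mpr hq'1.1
            rw [houtdelu, Finset.mem_singleton] at h5
            have hq'z : q' = z := congrArg Prod.snd h5
            have hq'N : q' ∈ N.verts := (edge_verts hN (del_sub hq'1.1)).2
            have hq'sp : Sp N E q' := hMinv.2.2.1 q' hq'N hq'1.2
            rcases (hSp_iff q').mp hq'sp with h' | h'
            · exact hz_ne_u (hq'z ▸ h')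
            · exact hz2 (hq'z ▸ h')
        · rw [hqr] at hq1 hq2
          rcases hq2.cases_head with heq2 | ⟨q', hq'1, hq'2⟩
          · rw [← heq2] at hdb
            have hbcr : b = cr := by
              have h5 : (r, b) ∈ outE (N.deleteEdges E) r := mem_outE.mpr hdb
              rw [houtdelr, Finset.mem_singleton] at h5
              exact congrArg Prod.snd h5
            have hap' : a = p' := by
              have h5 : (a, r) ∈ inE (N.deleteEdges E) r := mem_inE.mpr hq1.1
              rw [hindelr, Finset.mem_singleton] at h5
              exact congrArg Prod.fst h5
            rw [hbcr, hap']
            exact Finset.mem_union_right _ (by simp)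
          · exfalso
            have h5 : (r, q') ∈ outE (N.deleteEdges E) r := mem_outE.mpr hq'1.1
            rw [houtdelr, Finset.mem_singleton] at h5
            have hq'cr : q' = cr := congrArg Prod.snd h5
            have hq'N : q' ∈ N.verts := (edge_verts hN (del_sub hq'1.1)).2
            have hq'sp : Sp N E q' := hMinv.2.2.1 q' hq'N hq'1.2
            rcases (hSp_iff q').mp hq'sp with h' | h'
            · exact hcr_ne_u (hq'cr ▸ h')
            · exact hcr_ne_r (hq'cr ▸ h')
    · intro hmem
      rcases Finset.mem_union.mp hmem with hmem | hmem
      · obtain ⟨hNe, hE5e⟩ := Finset.mem_sdiff.mp hmem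
        -- endpoints avoid u, r
        have hanu : a ≠ u := by
          intro h
          rw [h] at hNe hE5e
          have h5 : (u, b) ∈ outE N u := mem_outE.mpr hNe
          rw [hz4] at h5
          rcases Finset.mem_insert.mp h5 with h' | h'
          · exact hE5e (by rw [hE5, h']; simp)
          · rw [Finset.mem_singleton] at h'
            exact hE5e (by rw [hE5, h']; simp)
        have hanr : a ≠ r := by
          intro h
          rw [h] at hNe hE5e
          have h5 : (r, b) ∈ outE N r := mem_outE.mpr hNe
          rw [houtEr, Finset.mem_singleton] at h5
          exact hE5e (by rw [hE5, h5]; simp)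
        have hbnu : b ≠ u := by
          intro h
          rw [h] at hNe hE5e
          have h5 : (a, u) ∈ inE N u := mem_inE.mpr hNe
          rw [hinEu, Finset.mem_singleton] at h5
          exact hE5e (by rw [hE5, h5]; simp)
        have hbnr : b ≠ r := by
          intro h
          rw [h] at hNe hE5e
          have h5 : (a, r) ∈ inE N r := mem_inE.mpr hNe
          rw [hinEr] at h5
          rcases Finset.mem_insert.mp h5 with h' | h'
          · exact hE5e (by rw [hE5, h']; simp)
          · rw [Finset.mem_singleton] at h'
            exact hE5e (by rw [hE5, h']; simp)
        have hdelm : (a, b) ∈ (N.deleteEdges E).edges := by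
          refine mem_del.mpr ⟨hNe, ?_⟩
          rw [hEdef, Finset.mem_singleton]
          exact fun h => hanu (congrArg Prod.fst h)
        exact (hMinv.2.2.2 a b).mpr ⟨(hmemiff a).mpr ⟨(edge_verts hN hNe).1, by tauto⟩,
          (hmemiff b).mpr ⟨(edge_verts hN hNe).2, by tauto⟩,
          a, Relation.ReflTransGen.refl, hdelm⟩
      · simp only [Finset.mem_insert, Finset.mem_singleton, Prod.mk.injEq] at hmem
        rcases hmem with ⟨ha, hb⟩ | ⟨ha, hb⟩
        · rw [ha, hb]
          refine (hMinv.2.2.2 pu z).mpr ⟨?_, ?_, u,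
            Relation.ReflTransGen.single ⟨hdel_pu, hunm⟩, hdel_uz⟩
          · refine (hmemiff pu).mpr ⟨(edge_verts hN hpu).1, ?_⟩
            rintro (h | h)
            · exact hpu_ne_u h
            · exact hpu_ne_r h
          · refine (hmemiff z).mpr ⟨(edge_verts hN hz1).2, ?_⟩
            rintro (h | h)
            · exact hz_ne_u h
            · exact hz2 h
        · rw [ha, hb]
          refine (hMinv.2.2.2 p' cr).mpr ⟨?_, ?_, r,
            Relation.ReflTransGen.single ⟨hdel_p'r, hrnm⟩, hdel_rcr⟩
          · refine (hmemiff p').mpr ⟨(edge_verts hN hp'1).1, ?_⟩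
            rintro (h | h)
            · exact hp'2 h
            · exact hp'_ne_r h
          · refine (hmemiff cr).mpr ⟨(edge_verts hN hcr1).2, ?_⟩
            rintro (h | h)
            · exact hcr_ne_u h
            · exact hcr_ne_r h
  -- cardinalities
  have e5c : E5.card = 5 := by
    have h1 : ((p', r) : ℕ × ℕ) ∉ ({(r, cr)} : Finset (ℕ × ℕ)) := by
      rw [Finset.mem_singleton]
      exact fun h => hp'_ne_r (congrArg Prod.fst h)
    have h2 : ((u, z) : ℕ × ℕ) ∉ ({(p', r), (r, cr)} : Finset (ℕ × ℕ)) := by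
      simp only [Finset.mem_insert, Finset.mem_singleton]
      rintro (h | h)
      · exact hz2 (congrArg Prod.snd h)
      · exact hur (congrArg Prod.fst h)
    have h3 : ((pu, u) : ℕ × ℕ) ∉ ({(u, z), (p', r), (r, cr)} : Finset (ℕ × ℕ)) := by
      simp only [Finset.mem_insert, Finset.mem_singleton]
      rintro (h | h | h)
      · exact hz_ne_u (congrArg Prod.snd h).symm
      · exact hur (congrArg Prod.snd h)
      · exact hpu_ne_r (congrArg Prod.fst h)
    have h4 : ((u, r) : ℕ × ℕ) ∉ ({(pu, u), (u, z), (p', r), (r, cr)} : Finset (ℕ × ℕ)) := by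
      simp only [Finset.mem_insert, Finset.mem_singleton]
      rintro (h | h | h | h)
      · exact hur (congrArg Prod.snd h).symm
      · exact hz2 (congrArg Prod.snd h).symm
      · exact hp'2 (congrArg Prod.fst h).symm
      · exact hur (congrArg Prod.fst h)
    rw [hE5, Finset.card_insert_of_notMem h4, Finset.card_insert_of_notMem h3,
      Finset.card_insert_of_notMem h2, Finset.card_insert_of_notMem h1,
      Finset.card_singleton]
  have hnew1 : ((pu, z) : ℕ × ℕ) ∉ N.edges := fun h =>
    hz3 (retic_of_indeg_two hN (edge_verts hN hz1).2 (two_in hz1 h (Ne.symm hpu_ne_u)))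
  have hnew2 : ((p', cr) : ℕ × ℕ) ∉ N.edges := fun h =>
    hcr2 (retic_of_indeg_two hN (edge_verts hN hcr1).2 (two_in hcr1 h (Ne.symm hp'_ne_r)))
  have hnewne : ((pu, z) : ℕ × ℕ) ≠ (p', cr) := by
    intro h
    have hz_cr : z = cr := congrArg Prod.snd h
    exact hz3 (retic_of_indeg_two hN (edge_verts hN hz1).2
      (two_in hz1 (by rw [hz_cr]; exact hcr1) hur))
  have hMcard : M.edges.card = (N.edges.card - 5) + 2 := by
    rw [hedges, Finset.card_union_of_disjoint, Finset.card_sdiff_of_subset hE5sub, e5c]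
    · congr 1
      rw [Finset.card_insert_of_notMem (by rw [Finset.mem_singleton]; exact hnewne),
        Finset.card_singleton]
    · rw [Finset.disjoint_right]
      intro e' he' he''
      have hh := (Finset.mem_sdiff.mp he'').1
      rcases Finset.mem_insert.mp he' with h' | h'
      · rw [h'] at hh; exact hnew1 hh
      · rw [Finset.mem_singleton] at h'; rw [h'] at hh; exact hnew2 hh
  have h5le : 5 ≤ N.edges.card := e5c ▸ Finset.card_le_card hE5sub
  omega

end CPf
namespace CPf
open Relation

variable {X : Type}

section Blobs

variable {N : Net X}

lemma connectedIn_mono {S T : Finset ℕ} (hST : S ⊆ T) {u v : ℕ}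
    (h : N.ConnectedIn S u v) : N.ConnectedIn T u v :=
  Relation.ReflTransGen.mono (r := fun a b => a ∈ S ∧ b ∈ S ∧ N.Adj a b)
    (p := fun a b => a ∈ T ∧ b ∈ T ∧ N.Adj a b)
    (fun a b hab => ⟨hST hab.1, hST hab.2.1, hab.2.2⟩) _ _ h

lemma connectedIn_symm {S : Finset ℕ} {u v : ℕ} (h : N.ConnectedIn S u v) :
    N.ConnectedIn S v u := by
  have hsym : Symmetric (fun a b => a ∈ S ∧ b ∈ S ∧ N.Adj a b) := by
    intro a b hab
    exact ⟨hab.2.1, hab.1, hab.2.2.symm⟩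
  exact (@Relation.ReflTransGen.stdSymm _ _ ⟨fun a b hab => hsym hab⟩).symm _ _ h

lemma bicon_union {S T : Finset ℕ} (hS : N.BiconnectedSet S) (hT : N.BiconnectedSet T)
    (hcard : 2 ≤ (S ∩ T).card) : N.BiconnectedSet (S ∪ T) := by
  obtain ⟨hS3, hSsub, hScon, hScut⟩ := hS
  obtain ⟨hT3, hTsub, hTcon, hTcut⟩ := hT
  have hW : (S ∩ T).Nonempty := by
    rw [← Finset.card_pos]; omega
  obtain ⟨w, hw⟩ := hW
  have hwS : w ∈ S := (Finset.mem_inter.mp hw).1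
  have hwT : w ∈ T := (Finset.mem_inter.mp hw).2
  refine ⟨le_trans hS3 (Finset.card_le_card Finset.subset_union_left),
    Finset.union_subset hSsub hTsub, ?_, ?_⟩
  · intro u hu v hv
    have key : ∀ z ∈ S ∪ T, N.ConnectedIn (S ∪ T) z w := by
      intro z hz
      rcases Finset.mem_union.mp hz with h | h
      · exact connectedIn_mono Finset.subset_union_left (hScon z h w hwS)
      · exact connectedIn_mono Finset.subset_union_right (hTcon z h w hwT)
    exact Relation.ReflTransGen.trans (key u hu) (connectedIn_symm (key v hv))
  · intro c hc u hu v hv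
    -- a shared vertex different from c
    have h1 : 1 ≤ ((S ∩ T).erase c).card := by
      have := Finset.card_erase_of_mem (s := S ∩ T) (a := c)
      by_cases hcm : c ∈ S ∩ T
      · rw [Finset.card_erase_of_mem hcm]; omega
      · rw [Finset.erase_eq_of_notMem hcm]; omega
    obtain ⟨w', hw'⟩ := Finset.card_pos.mp (show 0 < ((S ∩ T).erase c).card by omega)
    have hw'ne : w' ≠ c := (Finset.mem_erase.mp hw').1
    have hw'S : w' ∈ S := (Finset.mem_inter.mp (Finset.mem_erase.mp hw').2).1
    have hw'T : w' ∈ T := (Finset.mem_inter.mp (Finset.mem_erase.mp hw').2).2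
    have hsube : ∀ {z}, z ∈ S → c ∉ S → z ∈ (S ∪ T).erase c := by
      intro z hz hcS
      exact Finset.mem_erase.mpr ⟨fun h => hcS (h ▸ hz), Finset.mem_union_left _ hz⟩
    have hsube' : S.erase c ⊆ (S ∪ T).erase c :=
      Finset.erase_subset_erase c Finset.subset_union_left
    have hsube'' : T.erase c ⊆ (S ∪ T).erase c :=
      Finset.erase_subset_erase c Finset.subset_union_right
    have key : ∀ z, z ∈ (S ∪ T).erase c → N.ConnectedIn ((S ∪ T).erase c) z w' := by
      intro z hz
      obtain ⟨hzc, hzU⟩ := Finset.mem_erase.mp hz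
      rcases Finset.mem_union.mp hzU with h | h
      · by_cases hcS : c ∈ S
        · exact connectedIn_mono hsube'
            (hScut c hcS z (Finset.mem_erase.mpr ⟨hzc, h⟩) w'
              (Finset.mem_erase.mpr ⟨hw'ne, hw'S⟩))
        · refine connectedIn_mono ?_ (hScon z h w' hw'S)
          intro z' hz'
          exact hsube hz' hcS
      · by_cases hcT : c ∈ T
        · exact connectedIn_mono hsube''
            (hTcut c hcT z (Finset.mem_erase.mpr ⟨hzc, h⟩) w'
              (Finset.mem_erase.mpr ⟨hw'ne, hw'T⟩))
        · refine connectedIn_mono ?_ (hTcon z h w' hw'T)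
          intro z' hz'
          exact Finset.mem_erase.mpr ⟨fun hh => hcT (hh ▸ hz'), Finset.mem_union_right _ hz'⟩
    exact Relation.ReflTransGen.trans (key u hu) (connectedIn_symm (key v hv))

lemma blob_eq_of_two {S T : Finset ℕ} (hS : N.BlobSet S) (hT : N.BlobSet T) {a b : ℕ}
    (hab : a ≠ b) (haS : a ∈ S) (hbS : b ∈ S) (haT : a ∈ T) (hbT : b ∈ T) : S = T := by
  have hsub : ({a, b} : Finset ℕ) ⊆ S ∩ T := by
    intro z hz
    rcases Finset.mem_insert.mp hz with h | h
    · rw [h]; exact Finset.mem_inter.mpr ⟨haS, haT⟩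
    · rw [Finset.mem_singleton] at h; rw [h]; exact Finset.mem_inter.mpr ⟨hbS, hbT⟩
  have hcard : 2 ≤ (S ∩ T).card := by
    have h2 : ({a, b} : Finset ℕ).card = 2 := by
      rw [Finset.card_insert_of_notMem (by simp [hab]), Finset.card_singleton]
    rw [← h2]
    exact Finset.card_le_card hsub
  have hun := bicon_union hS.1 hT.1 hcard
  have h1 := hS.2 (S ∪ T) hun Finset.subset_union_left
  have h2 := hT.2 (S ∪ T) hun Finset.subset_union_right
  exact h1.trans h2.symm

lemma exists_blob {S : Finset ℕ} (hbi : N.BiconnectedSet S) :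
    ∃ T, N.BlobSet T ∧ S ⊆ T := by
  suffices H : ∀ n (S : Finset ℕ), N.BiconnectedSet S → N.verts.card - S.card = n →
      ∃ T, N.BlobSet T ∧ S ⊆ T by
    exact H (N.verts.card - S.card) S hbi rfl
  intro n
  induction n using Nat.strong_induction_on with
  | _ n ih =>
    intro S hbi hn
    by_cases hmax : ∀ T, N.BiconnectedSet T → S ⊆ T → S = T
    · exact ⟨S, ⟨hbi, hmax⟩, Finset.Subset.refl S⟩
    · push_neg at hmax
      obtain ⟨T, hTbi, hST, hSneT⟩ := hmax
      have hTsub : T ⊆ N.verts := hTbi.2.1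
      have hTle := Finset.card_le_card hTsub
      have hlt : S.card < T.card :=
        Finset.card_lt_card (Finset.ssubset_iff_subset_ne.mpr ⟨hST, hSneT⟩)
      obtain ⟨T', hT', hTT'⟩ := ih (N.verts.card - T.card) (by omega) T hTbi rfl
      exact ⟨T', hT', le_trans hST hTT'⟩

lemma retic_inedge_in_bicon (hN : N.TreeChild) {S : Finset ℕ} (hS : N.BiconnectedSet S)
    {ρ : ℕ} (hρS : ρ ∈ S) (hρ : N.IsRetic ρ) : ∃ t ∈ S, (t, ρ) ∈ N.edges := by
  by_contra h
  push_neg at h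
  obtain ⟨c, hc1, -, hc3⟩ := tc_retic_child hN hρ
  obtain ⟨hS3, hSsub, hScon, hScut⟩ := hS
  have child_eq : ∀ z, N.Edge ρ z → z = c := by
    intro z hz
    have : (ρ, z) ∈ outE N ρ := mem_outE.mpr hz
    rw [hc3, Finset.mem_singleton] at this
    exact congrArg Prod.snd this
  by_cases hcS : c ∈ S
  · have h2 : 1 < (S.erase c).card := by
      rw [Finset.card_erase_of_mem hcS]; omega
    obtain ⟨u, hu, hune⟩ := Finset.exists_mem_ne h2 ρ
    have hcon := hScut c hcS ρ (Finset.mem_erase.mpr ⟨edge_ne hN hc1, hρS⟩) u hu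
    rcases hcon.cases_head with heq | ⟨z, hz1, hz2⟩
    · exact hune heq.symm
    · rcases hz1.2.2 with hedge | hedge
      · exact (Finset.mem_erase.mp hz1.2.1).1 (child_eq z hedge)
      · exact h z (Finset.mem_of_mem_erase hz1.2.1) hedge
  · obtain ⟨u, hu, hune⟩ := Finset.exists_mem_ne (show 1 < S.card by omega) ρ
    have hcon := hScon ρ hρS u hu
    rcases hcon.cases_head with heq | ⟨z, hz1, hz2⟩
    · exact hune heq.symm
    · rcases hz1.2.2 with hedge | hedge
      · exact hcS ((child_eq z hedge) ▸ hz1.2.1)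
      · exact h z hz1.2.1 hedge

/-- two distinct reticulations in a set with reticulation count at least 2 -/
lemma two_retics {S : Finset ℕ} {k : ℕ} (hk : 2 ≤ k) (hcount : N.reticCount S = k) :
    ∃ ρ₁ ρ₂, ρ₁ ∈ S ∧ ρ₂ ∈ S ∧ N.IsRetic ρ₁ ∧ N.IsRetic ρ₂ ∧ ρ₁ ≠ ρ₂ := by
  have hc' : (S.filter fun v => N.IsRetic v).card = k := hcount
  have h2 : 1 < (S.filter fun v => N.IsRetic v).card := by omega
  obtain ⟨ρ₁, hρ₁⟩ := Finset.card_pos.mp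
    (show 0 < (S.filter fun v => N.IsRetic v).card by omega)
  obtain ⟨ρ₂, hρ₂, hne⟩ := Finset.exists_mem_ne h2 ρ₁
  obtain ⟨h11, h12⟩ := Finset.mem_filter.mp hρ₁
  obtain ⟨h21, h22⟩ := Finset.mem_filter.mp hρ₂
  exact ⟨ρ₁, ρ₂, h11, h21, h12, h22, hne.symm⟩

/-- a reticulation exists in a level-k (k ≥ 1) blob -/
lemma retic_exists {S : Finset ℕ} {k : ℕ} (hk : 1 ≤ k) (hcount : N.reticCount S = k) :
    ∃ ρ ∈ S, N.IsRetic ρ := by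
  have hc' : (S.filter fun v => N.IsRetic v).card = k := hcount
  have h1 : 0 < (S.filter fun v => N.IsRetic v).card := by omega
  obtain ⟨ρ, hρ⟩ := Finset.card_pos.mp h1
  obtain ⟨h1', h2'⟩ := Finset.mem_filter.mp hρ
  exact ⟨ρ, h1', h2'⟩

end Blobs

end CPf
namespace CPf
open Relation

variable {X : Type}

section Construct

variable {N : Net X}

/-- `ρ` equals `w` or is a child of `w`. -/
def ISX (N : Net X) (w ρ : ℕ) : Prop := ρ = w ∨ N.Edge w ρ

/-- A candidate reticulation edge avoiding the cherry region of `px, py`. -/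
def GOODe (N : Net X) (px py : ℕ) (e : ℕ × ℕ) : Prop :=
  e.1 ≠ px ∧ e.1 ≠ py ∧ ¬ ISX N px e.2 ∧ ¬ ISX N py e.2

/-- Candidate reticulation edges inside a blob. -/
def cand (N : Net X) (S : Finset ℕ) : Finset (ℕ × ℕ) :=
  N.edges.filter fun e => e.1 ∈ S ∧ e.2 ∈ S ∧ N.IsRetic e.2

def goodS (N : Net X) (px py : ℕ) (S : Finset ℕ) : Finset (ℕ × ℕ) :=
  (cand N S).filter (GOODe N px py)

/-- The level-k blobs. -/
def BB (N : Net X) (k : ℕ) : Finset (Finset ℕ) :=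
  N.verts.powerset.filter fun S => N.BlobSet S ∧ N.reticCount S = k

lemma mem_BB {k : ℕ} {S : Finset ℕ} :
    S ∈ BB N k ↔ N.BlobSet S ∧ N.reticCount S = k := by
  constructor
  · intro h
    exact (Finset.mem_filter.mp h).2
  · intro h
    exact Finset.mem_filter.mpr ⟨Finset.mem_powerset.mpr h.1.1.2.1, h⟩

lemma mem_cand {S : Finset ℕ} {e : ℕ × ℕ} :
    e ∈ cand N S ↔ e ∈ N.edges ∧ e.1 ∈ S ∧ e.2 ∈ S ∧ N.IsRetic e.2 := by
  unfold cand
  exact Finset.mem_filter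

/-- at most one reticulation is equal to or a child of a node with a leaf child. -/
lemma isx_subsingleton (hN : N.TreeChild) {w l : ℕ} (hwl : (w, l) ∈ N.edges)
    (hl : N.IsLeaf l) {σ σ' : ℕ} (hσ : N.IsRetic σ) (hσ' : N.IsRetic σ')
    (h1 : ISX N w σ) (h2 : ISX N w σ') : σ = σ' := by
  rcases h1 with h1 | h1 <;> rcases h2 with h2 | h2
  · rw [h1, h2]
  · -- σ = w retic, so w has a unique child, namely l; σ' = l is a leaf: contra
    exfalso
    have hwr : N.IsRetic w := h1 ▸ hσ
    have : σ' = l := out_unique hwr.2.2 h2 hwl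
    exact leaf_not_retic (this ▸ hl) hσ'
  · exfalso
    have hwr : N.IsRetic w := h2 ▸ hσ'
    have : σ = l := out_unique hwr.2.2 h1 hwl
    exact leaf_not_retic (this ▸ hl) hσ
  · by_contra hne
    obtain ⟨-, -, -, hchild⟩ := children_pair hN h1 h2 hne
    rcases hchild l hwl with h' | h'
    · exact leaf_not_retic (h' ▸ hl) (h' ▸ hσ)
    · exact leaf_not_retic (h' ▸ hl) (h' ▸ hσ')

/-- In a forced blob, there are two distinct reticulations, each in the cherry region. -/
lemma forced_two (hN : N.TreeChild) {px py : ℕ} {S : Finset ℕ} {k : ℕ} (hk : 2 ≤ k)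
    (hblob : N.BlobSet S) (hcount : N.reticCount S = k)
    (hempty : goodS N px py S = ∅) :
    ∃ ρ₁ ρ₂, ρ₁ ≠ ρ₂ ∧ N.IsRetic ρ₁ ∧ N.IsRetic ρ₂ ∧
      (ISX N px ρ₁ ∨ ISX N py ρ₁) ∧ (ISX N px ρ₂ ∨ ISX N py ρ₂) := by
  obtain ⟨ρ₁, ρ₂, hρ₁S, hρ₂S, hρ₁r, hρ₂r, hne⟩ := two_retics hk hcount
  have hfail : ∀ e ∈ cand N S, ¬ GOODe N px py e := by
    intro e he hg
    have : e ∈ goodS N px py S := Finset.mem_filter.mpr ⟨he, hg⟩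
    rw [hempty] at this
    exact absurd this (Finset.notMem_empty e)
  have mk : ∀ ρ, ρ ∈ S → N.IsRetic ρ → ISX N px ρ ∨ ISX N py ρ := by
    intro ρ hρS hρr
    obtain ⟨t, htS, ht⟩ := retic_inedge_in_bicon hN hblob.1 hρS hρr
    have hcand : (t, ρ) ∈ cand N S := mem_cand.mpr ⟨ht, htS, hρS, hρr⟩
    have hng := hfail _ hcand
    rw [GOODe] at hng
    push_neg at hng
    by_cases h1 : t = px
    · exact Or.inl (Or.inr (h1 ▸ ht))
    · by_cases h2 : t = py
      · exact Or.inr (Or.inr (h2 ▸ ht))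
      · by_cases h3 : ISX N px ρ
        · exact Or.inl h3
        · exact Or.inr (hng h1 h2 h3)
  exact ⟨ρ₁, ρ₂, hne, hρ₁r, hρ₂r, mk ρ₁ hρ₁S hρ₁r, mk ρ₂ hρ₂S hρ₂r⟩

/-- Contradiction engine: a reticulation in both cherry regions kills forcedness. -/
lemma forced_contra (hN : N.TreeChild) {px py x y : ℕ} (hx : N.IsLeaf x) (hy : N.IsLeaf y)
    (hpx : (px, x) ∈ N.edges) (hpy : (py, y) ∈ N.edges) {σ : ℕ} (hσ : N.IsRetic σ)
    (h1 : ISX N px σ) (h2 : ISX N py σ)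
    {ρ₁ ρ₂ : ℕ} (hne : ρ₁ ≠ ρ₂) (hρ₁r : N.IsRetic ρ₁) (hρ₂r : N.IsRetic ρ₂)
    (hd₁ : ISX N px ρ₁ ∨ ISX N py ρ₁) (hd₂ : ISX N px ρ₂ ∨ ISX N py ρ₂) : False := by
  have e1 : ρ₁ = σ := by
    rcases hd₁ with h | h
    · exact isx_subsingleton hN hpx hx hρ₁r hσ h h1
    · exact isx_subsingleton hN hpy hy hρ₁r hσ h h2
  have e2 : ρ₂ = σ := by
    rcases hd₂ with h | h
    · exact isx_subsingleton hN hpx hx hρ₂r hσ h h1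
    · exact isx_subsingleton hN hpy hy hρ₂r hσ h h2
  exact hne (e1.trans e2.symm)

/-- Construction of the edge-deletion set for the MLLS, avoiding the cherry region. -/
lemma mlls_construct (hN : N.TreeChild) {k : ℕ} (hk : 2 ≤ k) {x y px py : ℕ}
    (hx : N.IsLeaf x) (hy : N.IsLeaf y) (hpx : (px, x) ∈ N.edges) (hpy : (py, y) ∈ N.edges) :
    ∃ E : Finset (ℕ × ℕ), (∀ e ∈ E, N.IsReticEdge e) ∧
      (∀ S, N.BlobSet S → N.reticCount S = k → ∃! e, e ∈ E ∧ e.1 ∈ S ∧ e.2 ∈ S) ∧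
      (∀ e ∈ E, ∃ S, N.BlobSet S ∧ N.reticCount S = k ∧ e.1 ∈ S ∧ e.2 ∈ S) ∧
      (∀ e ∈ E, e.1 ≠ py ∧ e.2 ≠ py) ∧
      ((∃ e ∈ E, e.1 = px ∨ e.2 = px) →
        ∀ d, N.Edge py d → ∀ e ∈ E, e.1 ≠ d ∧ e.2 ≠ d) := by
  classical
  have spec : ∀ S ∈ BB N k, ∃ e, e ∈ cand N S ∧
      (GOODe N px py e ∨ (goodS N px py S = ∅ ∧ ISX N px e.2)) := by
    intro S hS
    obtain ⟨hblob, hcount⟩ := mem_BB.mp hS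
    by_cases hg : (goodS N px py S).Nonempty
    · obtain ⟨e, he⟩ := hg
      obtain ⟨h1, h2⟩ := Finset.mem_filter.mp he
      exact ⟨e, h1, Or.inl h2⟩
    · rw [Finset.not_nonempty_iff_eq_empty] at hg
      obtain ⟨ρ₁, ρ₂, hne, hρ₁r, hρ₂r, hd₁, hd₂⟩ := forced_two hN hk hblob hcount hg
      -- we need the witnesses inside S with their in-edges; redo extraction
      obtain ⟨ρ₁', ρ₂', hρ₁S, hρ₂S, hρ₁r', hρ₂r', hne'⟩ := two_retics hk hcount
      -- choose a reticulation in S with ISX px; the in-edge gives the candidate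
      have mk : ∀ ρ, ρ ∈ S → N.IsRetic ρ → ISX N px ρ ∨ ISX N py ρ := by
        intro ρ hρS hρr
        obtain ⟨t, htS, ht⟩ := retic_inedge_in_bicon hN hblob.1 hρS hρr
        have hcand : (t, ρ) ∈ cand N S := mem_cand.mpr ⟨ht, htS, hρS, hρr⟩
        have hng : ¬ GOODe N px py (t, ρ) := by
          intro hgood
          have : (t, ρ) ∈ goodS N px py S := Finset.mem_filter.mpr ⟨hcand, hgood⟩
          rw [hg] at this
          exact absurd this (Finset.notMem_empty _)
        rw [GOODe] at hng
        push_neg at hng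
        by_cases h1 : t = px
        · exact Or.inl (Or.inr (h1 ▸ ht))
        · by_cases h2 : t = py
          · exact Or.inr (Or.inr (h2 ▸ ht))
          · by_cases h3 : ISX N px ρ
            · exact Or.inl h3
            · exact Or.inr (hng h1 h2 h3)
      have hex : ∃ ρ, ρ ∈ S ∧ N.IsRetic ρ ∧ ISX N px ρ := by
        rcases mk ρ₁' hρ₁S hρ₁r' with h | h
        · exact ⟨ρ₁', hρ₁S, hρ₁r', h⟩
        · rcases mk ρ₂' hρ₂S hρ₂r' with h' | h'
          · exact ⟨ρ₂', hρ₂S, hρ₂r', h'⟩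
          · -- both ISX py: contradiction with subsingleton
            exfalso
            exact hne' (isx_subsingleton hN hpy hy hρ₁r' hρ₂r' h h')
      obtain ⟨ρ, hρS, hρr, hρx⟩ := hex
      obtain ⟨t, htS, ht⟩ := retic_inedge_in_bicon hN hblob.1 hρS hρr
      exact ⟨(t, ρ), mem_cand.mpr ⟨ht, htS, hρS, hρr⟩, Or.inr ⟨hg, hρx⟩⟩
  choose f hf using spec
  set E : Finset (ℕ × ℕ) := (BB N k).attach.image (fun a => f a.1 a.2) with hEdef
  have memE : ∀ {e : ℕ × ℕ}, e ∈ E ↔ ∃ S, ∃ hS : S ∈ BB N k, f S hS = e := by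
    intro e
    rw [hEdef, Finset.mem_image]
    constructor
    · rintro ⟨⟨S, hS⟩, -, h⟩
      exact ⟨S, hS, h⟩
    · rintro ⟨S, hS, h⟩
      exact ⟨⟨S, hS⟩, Finset.mem_attach _ _, h⟩
  have hcand_all : ∀ {e : ℕ × ℕ}, e ∈ E → ∃ S, ∃ hS : S ∈ BB N k, f S hS = e ∧
      e ∈ cand N S ∧ (GOODe N px py e ∨ (goodS N px py S = ∅ ∧ ISX N px e.2)) := by
    intro e he
    obtain ⟨S, hS, hfe⟩ := memE.mp he
    obtain ⟨h1, h2⟩ := hf S hS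
    rw [hfe] at h1 h2
    exact ⟨S, hS, hfe, h1, h2⟩
  refine ⟨E, ?_, ?_, ?_, ?_, ?_⟩
  · -- reticulation edges
    intro e he
    obtain ⟨S, hS, -, hc, -⟩ := hcand_all he
    obtain ⟨h1, -, -, h4⟩ := mem_cand.mp hc
    exact ⟨h1, h4⟩
  · -- exactly one edge per level-k blob
    intro S hblob hcount
    have hS : S ∈ BB N k := mem_BB.mpr ⟨hblob, hcount⟩
    obtain ⟨hc, -⟩ := hf S hS
    obtain ⟨hcN, hc1, hc2, -⟩ := mem_cand.mp hc
    refine ⟨f S hS, ⟨memE.mpr ⟨S, hS, rfl⟩, hc1, hc2⟩, ?_⟩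
    rintro e' ⟨he'E, he'1, he'2⟩
    obtain ⟨T, hT, hfe', hc', -⟩ := hcand_all he'E
    obtain ⟨hc'N, hd1, hd2, -⟩ := mem_cand.mp hc'
    have hST : S = T := by
      refine blob_eq_of_two hblob (mem_BB.mp hT).1 (edge_ne hN hc'N) he'1 he'2 hd1 hd2
    subst hST
    exact hfe'.symm
  · -- every edge lies in a level-k blob
    intro e he
    obtain ⟨S, hS, -, hc, -⟩ := hcand_all he
    obtain ⟨-, h1, h2, -⟩ := mem_cand.mp hc
    obtain ⟨hblob, hcount⟩ := mem_BB.mp hS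
    exact ⟨S, hblob, hcount, h1, h2⟩
  · -- py is never an endpoint
    intro e he
    obtain ⟨S, hS, -, hc, hdisj⟩ := hcand_all he
    obtain ⟨heN, -, -, her⟩ := mem_cand.mp hc
    have heN' : (e.1, e.2) ∈ N.edges := by rwa [Prod.mk.eta]
    rcases hdisj with hg | ⟨hforced, hisx⟩
    · constructor
      · exact hg.2.1
      · intro h
        exact hg.2.2.2 (Or.inl h)
    · obtain ⟨hblob, hcount⟩ := mem_BB.mp hS
      obtain ⟨ρ₁, ρ₂, hne, h1r, h2r, hd₁, hd₂⟩ := forced_two hN hk hblob hcount hforced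
      constructor
      · -- e.1 = py impossible
        intro h
        have hedge : N.Edge py e.2 := h ▸ heN'
        exact forced_contra hN hx hy hpx hpy her hisx (Or.inr hedge) hne h1r h2r hd₁ hd₂
      · -- e.2 = py impossible
        intro h
        have hσ2 : ISX N py e.2 := Or.inl h
        exact forced_contra hN hx hy hpx hpy her hisx hσ2 hne h1r h2r hd₁ hd₂
  · -- children of py are never endpoints when px is touched
    rintro ⟨estar, hestar, hcases⟩ d hpyd e' he'
    -- first: the px-edge must come from a forced blob
    obtain ⟨Sstar, hSstar, -, hcstar, hdisjstar⟩ := hcand_all hestar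
    have hforced : goodS N px py Sstar = ∅ := by
      rcases hdisjstar with hg | h
      · exfalso
        rcases hcases with h1 | h2
        · exact hg.1 h1
        · exact hg.2.2.1 (Or.inl h2)
      · exact h.1
    obtain ⟨hblobstar, hcountstar⟩ := mem_BB.mp hSstar
    obtain ⟨ρ₁, ρ₂, hne, h1r, h2r, hd₁, hd₂⟩ :=
      forced_two hN hk hblobstar hcountstar hforced
    -- y is not d
    obtain ⟨Te, hTe, -, hce', hdisj'⟩ := hcand_all he'
    obtain ⟨he'N, -, -, he'r⟩ := mem_cand.mp hce'
    have he'N' : (e'.1, e'.2) ∈ N.edges := by rwa [Prod.mk.eta]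
    constructor
    · -- e'.1 = d impossible: d would be a tree-node child of py, so no py-region retic
      intro h
      have hdN : (d, e'.2) ∈ N.edges := h ▸ he'N'
      have hdy : d ≠ y := by
        intro hdy
        exact no_out_of_zero hy.2.2 (hdy ▸ hdN)
      obtain ⟨-, -, hpynr, hpychild⟩ := children_pair hN hpy hpyd (Ne.symm hdy)
      obtain ⟨hdin, hdout, -⟩ := tc_tail hN hdN he'r
      -- no reticulation has ISX py: children are y (leaf) and d (tree)
      have hnoy : ∀ σ, N.IsRetic σ → ISX N py σ → False := by
        intro σ hσr hσ
        rcases hσ with h' | h'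
        · exact hpynr (h' ▸ hσr)
        · rcases hpychild σ h' with h'' | h''
          · exact leaf_not_retic (h'' ▸ hy) (h'' ▸ hσr)
          · rw [h''] at hσr
            have := hσr.2.2
            omega
      -- then both ρ's are ISX px, contradiction
      have e1 : ρ₁ = ρ₂ := by
        rcases hd₁ with hh1 | hh1
        · rcases hd₂ with hh2 | hh2
          · exact isx_subsingleton hN hpx hx h1r h2r hh1 hh2
          · exact absurd (hnoy ρ₂ h2r hh2) id
        · exact absurd (hnoy ρ₁ h1r hh1) id
      exact hne e1
    · -- e'.2 = d impossible: d would be a reticulation in both regions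
      intro h
      have hσ2 : ISX N py e'.2 := Or.inr (h ▸ hpyd)
      have hσ1 : ISX N px e'.2 := by
        rcases hdisj' with hg | hforced'
        · exact absurd hσ2 hg.2.2.2
        · exact hforced'.2
      exact forced_contra hN hx hy hpx hpy he'r hσ1 hσ2 hne h1r h2r hd₁ hd₂

end Construct

end CPf
/-- For a level-`k` (`k ≥ 2`) binary tree-child network `N` and leaves
`x, y`: `N` contains the cherry on `{x,y}` iff every MLLS of `N` contains it. -/
theorem cherry_iff_all_MLLS_cherry {X : Type} (N : Net X) (hN : N.TreeChild)
    (k : ℕ) (hk : 2 ≤ k) (hl : N.IsLevel k)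
    (x y : ℕ) (hx : N.IsLeaf x) (hy : N.IsLeaf y) :
    N.Cherry x y ↔ ∀ M, N.IsMLLS k M → M.Cherry x y := by
  constructor
  · exact fun hC M hM => CPf.forward_dir hN hC M hM
  · intro H
    obtain ⟨px, hpx, hpxIn⟩ := CPf.leaf_parent hN hx
    obtain ⟨py, hpy, hpyIn⟩ := CPf.leaf_parent hN hy
    obtain ⟨E, hE1, hE2, hE3, hE4, hE5⟩ := CPf.mlls_construct hN hk hx hy hpx hpy
    obtain ⟨M, hch, hterm, hMinv⟩ :=
      CPf.exists_terminal hN hE1 (N.deleteEdges E) (CPf.inv_init hN)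
    have hmlls : N.IsMLLS k M :=
      ⟨E, fun e he => CPf.all_retic_valid hN (hE1 e he), hE2, hE3, ⟨hch, hterm⟩⟩
    obtain ⟨hMx, hMy, hxy, q, hqx, hqy⟩ := H M hmlls
    -- the common parent must be py
    obtain ⟨-, -, d, ch, hdy⟩ := (hMinv.2.2.2 q y).mp hqy
    have hdpy : d = py := CPf.in_unique hy.2.1 (CPf.del_sub hdy) hpy
    rw [hdpy] at ch
    have hpyN : py ∈ N.verts := (CPf.edge_verts hN hpy).1
    have hpynsp : ¬ CPf.Sp N E py := CPf.sp_not_endpoint hN hpyN (fun e he => hE4 e he)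
    have hqpy : q = py := by
      rcases CPf.chain_start_cases ch with h | h
      · exact h
      · exact absurd (hMinv.2.2.1 py hpyN h) hpynsp
    -- analyze the chain to x
    obtain ⟨-, -, d', ch', hdx⟩ := (hMinv.2.2.2 q x).mp hqx
    have hdpx : d' = px := CPf.in_unique hx.2.1 (CPf.del_sub hdx) hpx
    rw [hdpx, hqpy] at ch'
    rcases ch'.cases_head with heq | ⟨d₁, hd₁, hrest⟩
    · -- py = px: this is the cherry
      exact ⟨hx, hy, hxy, py, by rw [heq]; exact hpx, hpy⟩
    · exfalso
      have hd₁N : d₁ ∈ N.verts := (CPf.edge_verts hN (CPf.del_sub hd₁.1)).2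
      have hd₁sp : CPf.Sp N E d₁ := hMinv.2.2.1 d₁ hd₁N hd₁.2
      have hpxsp : CPf.Sp N E px := by
        rcases CPf.chain_start_cases hrest with h | h
        · rw [← h]; exact hd₁sp
        · exact hMinv.2.2.1 px (CPf.edge_verts hN hpx).1 h
      obtain ⟨estar, hestarE, hestar⟩ := CPf.sp_endpoint hN hpxsp
      have hpyd₁ : N.Edge py d₁ := CPf.del_sub hd₁.1
      have hkey := hE5 ⟨estar, hestarE, hestar⟩ d₁ hpyd₁
      obtain ⟨e₂, he₂E, he₂⟩ := CPf.sp_endpoint hN hd₁sp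
      rcases he₂ with h | h
      · exact (hkey e₂ he₂E).1 h
      · exact (hkey e₂ he₂E).2 h
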